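/- arXiv:1502.00369 — 3 statements merged into one kernel-verified Lean document; each statement's English description precedes it below -/
import Mathlib

section
/- Every order interval in a Banach lattice is an almost Dunford-Pettis set. -/
open Filter Topology Pointwise

variable {E F G X : Type*}

section Defs

variable [NormedAddCommGroup E] [Lattice E] [HasSolidNorm E] [IsOrderedAddMonoid E] [NormedSpace ℝ E]

/-- `|f|` of a functional evaluated at `x ≥ 0`: `sup {f y : |y| ≤ x}`. -/
noncomputable def absEval (f : E →L[ℝ] ℝ) (x : E) : ℝ :=
  ⨆ y : {y : E // |y| ≤ x}, f y.1

/-- `|f| ⊓ |g| = 0` in the dual lattice, via the Riesz-Kantorovich formula. -/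
def DisjointPair (f g : E →L[ℝ] ℝ) : Prop :=
  ∀ x : E, 0 ≤ x →
    (⨅ y : {y : E // 0 ≤ y ∧ y ≤ x}, (absEval f y.1 + absEval g (x - y.1))) = 0

/-- A pairwise disjoint sequence of functionals. -/
def DisjointSeqDual (f : ℕ → E →L[ℝ] ℝ) : Prop :=
  ∀ n m, n ≠ m → DisjointPair (f n) (f m)

/-- A weakly null sequence in a normed space. -/
def WeaklyNullSeq {Y : Type*} [NormedAddCommGroup Y] [NormedSpace ℝ Y] (y : ℕ → Y) : Prop :=
  ∀ φ : Y →L[ℝ] ℝ, Tendsto (fun n => φ (y n)) atTop (𝓝 0)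

/-- An almost Dunford-Pettis set: disjoint weakly null sequences in the dual converge
uniformly to zero on it. -/
def AlmostDPSet (A : Set E) : Prop :=
  ∀ f : ℕ → E →L[ℝ] ℝ, DisjointSeqDual f → WeaklyNullSeq f →
    Tendsto (fun n => ⨆ a : A, |f n a.1|) atTop (𝓝 0)

end Defs


section AuxADP

variable [NormedAddCommGroup E] [Lattice E] [HasSolidNorm E] [IsOrderedAddMonoid E] [NormedSpace ℝ E]

omit [NormedSpace ℝ E] in
lemma aDP_norm_le_of_abs_le {v a : E} (h : |v| ≤ a) : ‖v‖ ≤ ‖a‖ := by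
  have h0 : 0 ≤ a := le_trans (abs_nonneg v) h
  rw [← norm_abs_eq_norm v]
  exact HasSolidNorm.solid (by rwa [abs_abs, abs_of_nonneg h0])

lemma aDP_bddAbove (f : E →L[ℝ] ℝ) (a : E) :
    BddAbove (Set.range fun y : {y : E // |y| ≤ a} => f y.1) := by
  refine ⟨‖f‖ * ‖a‖, ?_⟩
  rintro r ⟨⟨v, hv⟩, rfl⟩
  calc f v ≤ |f v| := le_abs_self _
    _ = ‖f v‖ := (Real.norm_eq_abs _).symm
    _ ≤ ‖f‖ * ‖v‖ := f.le_opNorm v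
    _ ≤ ‖f‖ * ‖a‖ := by
        have := aDP_norm_le_of_abs_le hv
        gcongr

lemma le_absEval (f : E →L[ℝ] ℝ) {v a : E} (h : |v| ≤ a) : f v ≤ absEval f a :=
  le_ciSup (aDP_bddAbove f a) (⟨v, h⟩ : {y : E // |y| ≤ a})

lemma abs_le_absEval (f : E →L[ℝ] ℝ) {v a : E} (h : |v| ≤ a) : |f v| ≤ absEval f a := by
  refine abs_le.2 ⟨?_, le_absEval f h⟩
  have h2 : f (-v) ≤ absEval f a := le_absEval f (by rwa [abs_neg])
  rw [map_neg] at h2; linarith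

lemma absEval_nonneg (f : E →L[ℝ] ℝ) {a : E} (h : 0 ≤ a) : 0 ≤ absEval f a := by
  simpa using le_absEval f (v := 0) (by simpa using h)

lemma absEval_le_norm (f : E →L[ℝ] ℝ) {a : E} : absEval f a ≤ ‖f‖ * ‖a‖ := by
  refine Real.iSup_le ?_ (by positivity)
  rintro ⟨v, hv⟩
  calc f v ≤ |f v| := le_abs_self _
    _ = ‖f v‖ := (Real.norm_eq_abs _).symm
    _ ≤ ‖f‖ * ‖v‖ := f.le_opNorm v
    _ ≤ ‖f‖ * ‖a‖ := by have := aDP_norm_le_of_abs_le hv; gcongr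

lemma absEval_zero (f : E →L[ℝ] ℝ) : absEval f (0 : E) = 0 :=
  le_antisymm (by simpa using absEval_le_norm f (a := (0:E))) (absEval_nonneg f le_rfl)

lemma absEval_mono (f : E →L[ℝ] ℝ) {a b : E} (hb : 0 ≤ b) (hab : a ≤ b) :
    absEval f a ≤ absEval f b :=
  Real.iSup_le (fun v => le_absEval f (v.2.trans hab)) (absEval_nonneg f hb)

omit [NormedSpace ℝ E] in
lemma aDP_trunc_spec (v a : E) (ha : 0 ≤ a) :
    |(v ⊓ a) ⊔ (-a)| ≤ a ∧ |v - ((v ⊓ a) ⊔ (-a))| ≤ (|v| - a) ⊔ 0 := by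
  set t := (v ⊓ a) ⊔ (-a) with hT
  have h1 : t ≤ a := sup_le inf_le_right ((neg_nonpos.2 ha).trans ha)
  have h2 : -a ≤ t := le_sup_right
  have hP0 : (0:E) ≤ (|v| - a) ⊔ 0 := le_sup_right
  have hup : v - t ≤ (|v| - a) ⊔ 0 := by
    have hle : v - t ≤ v - (v ⊓ a) := sub_le_sub_left le_sup_left v
    rw [sub_inf, sub_self] at hle
    refine hle.trans (sup_le hP0 (le_trans ?_ le_sup_left))
    exact sub_le_sub_right (le_abs_self v) a
  have hdn : -(v - t) ≤ (|v| - a) ⊔ 0 := by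
    rw [neg_sub, hT, sup_sub]
    refine sup_le (le_trans ?_ hP0) (le_trans ?_ le_sup_left)
    · simpa [sub_nonpos] using le_trans (sub_nonpos.2 (inf_le_left : v ⊓ a ≤ v)) hP0
    · have hnv : -v ≤ |v| := by simpa [abs_neg] using le_abs_self (-v)
      have h3 : -a - v = -v - a := by abel
      rw [h3]
      exact sub_le_sub_right hnv a
  exact ⟨abs_le'.2 ⟨h1, neg_le.1 h2⟩, abs_le'.2 ⟨hup, hdn⟩⟩

lemma absEval_add_le (f : E →L[ℝ] ℝ) {a b : E} (ha : 0 ≤ a) (hb : 0 ≤ b) :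
    absEval f (a + b) ≤ absEval f a + absEval f b := by
  refine Real.iSup_le ?_ (add_nonneg (absEval_nonneg f ha) (absEval_nonneg f hb))
  rintro ⟨v, hv⟩
  obtain ⟨ht, hvt⟩ := aDP_trunc_spec v a ha
  have hvt' : |v - ((v ⊓ a) ⊔ (-a))| ≤ b := by
    refine hvt.trans (sup_le ?_ hb)
    have : |v| - a ≤ a + b - a := sub_le_sub_right hv a
    simpa using this
  have hsplit : f v = f ((v ⊓ a) ⊔ (-a)) + f (v - ((v ⊓ a) ⊔ (-a))) := by
    rw [← map_add]; congr 1; abel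
  rw [hsplit]
  exact add_le_add (le_absEval f ht) (le_absEval f hvt')

lemma absEval_sum_le (f : E →L[ℝ] ℝ) {ι : Type*} (s : Finset ι) (a : ι → E)
    (ha : ∀ i ∈ s, 0 ≤ a i) :
    absEval f (∑ i ∈ s, a i) ≤ ∑ i ∈ s, absEval f (a i) := by
  induction s using Finset.cons_induction with
  | empty => simp [absEval_zero]
  | cons i s hi ih =>
    rw [Finset.sum_cons, Finset.sum_cons]
    have h1 : 0 ≤ a i := ha i (Finset.mem_cons_self i s)
    have h2 : ∀ j ∈ s, 0 ≤ a j := fun j hj => ha j (Finset.mem_cons_of_mem hj)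
    exact le_trans (absEval_add_le f h1 (Finset.sum_nonneg h2)) (by gcongr; exact ih h2)

omit [NormedSpace ℝ E] in
lemma aDP_abs_sum_le {ι : Type*} (s : Finset ι) (v : ι → E) :
    |∑ i ∈ s, v i| ≤ ∑ i ∈ s, |v i| := by
  induction s using Finset.cons_induction with
  | empty => simp
  | cons i s hi ih =>
    rw [Finset.sum_cons, Finset.sum_cons]
    exact le_trans (abs_add_le _ _) (by gcongr)

omit [NormedSpace ℝ E] in
lemma aDP_sub_inf'_eq {ι : Type*} (s : Finset ι) (hs : s.Nonempty) (z : ι → E) (u : E) :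
    u - s.inf' hs z = s.sup' hs (fun j => u - z j) := by
  induction hs using Finset.Nonempty.cons_induction with
  | singleton a => simp
  | cons a s h hs ih => rw [Finset.inf'_cons hs, Finset.sup'_cons hs, sub_inf, ih]

omit [NormedSpace ℝ E] in
lemma aDP_sum_le_sup'_add {ι : Type*} [DecidableEq ι] (w : ι → E) (s : Finset ι)
    (hs : s.Nonempty) (hw : ∀ i ∈ s, 0 ≤ w i) :
    ∑ i ∈ s, w i ≤ s.sup' hs w + ∑ i ∈ s, (w i ⊓ ∑ j ∈ s.erase i, w j) := by
  induction hs using Finset.Nonempty.cons_induction with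
  | singleton a => simp [inf_of_le_right (hw a (by simp))]
  | cons a s ha hs ih =>
    have hw' : ∀ i ∈ s, 0 ≤ w i := fun i hi => hw i (Finset.mem_cons_of_mem hi)
    have hwa : 0 ≤ w a := hw a (Finset.mem_cons_self a s)
    have hsup : s.sup' hs w ≤ ∑ j ∈ s, w j :=
      Finset.sup'_le hs w fun j hj => Finset.single_le_sum hw' hj
    calc ∑ i ∈ Finset.cons a s ha, w i = w a + ∑ i ∈ s, w i := Finset.sum_cons ha
      _ ≤ w a + (s.sup' hs w + ∑ i ∈ s, (w i ⊓ ∑ j ∈ s.erase i, w j)) := by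
          gcongr; exact ih hw'
      _ = ((w a ⊓ s.sup' hs w) + (w a ⊔ s.sup' hs w)) + ∑ i ∈ s, (w i ⊓ ∑ j ∈ s.erase i, w j) := by
          rw [inf_add_sup]; abel
      _ ≤ ((w a ⊓ ∑ j ∈ (Finset.cons a s ha).erase a, w j) + (Finset.cons a s ha).sup' (by simp) w)
            + ∑ i ∈ s, (w i ⊓ ∑ j ∈ (Finset.cons a s ha).erase i, w j) := by
          rw [Finset.erase_cons, Finset.sup'_cons hs]
          refine add_le_add (add_le_add (inf_le_inf_left _ hsup) le_rfl) ?_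
          refine Finset.sum_le_sum fun i hi => ?_
          refine inf_le_inf_left _ (Finset.sum_le_sum_of_subset_of_nonneg ?_ ?_)
          · intro j hj
            rw [Finset.mem_erase] at hj ⊢
            exact ⟨hj.1, Finset.mem_cons_of_mem hj.2⟩
          · intro j hj _
            rw [Finset.mem_erase, Finset.mem_cons] at hj
            rcases hj.2 with rfl | hjs
            · exact hwa
            · exact hw' j hjs
      _ = (Finset.cons a s ha).sup' (by simp) w
            + ∑ i ∈ Finset.cons a s ha, (w i ⊓ ∑ j ∈ (Finset.cons a s ha).erase i, w j) := by
          rw [Finset.sum_cons]; abel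

lemma key_combination (f : ℕ → E →L[ℝ] ℝ) (hd : DisjointSeqDual f) {u : E} (hu : 0 ≤ u)
    (s : Finset ℕ) (hs : s.Nonempty) (lam : ℕ → ℝ) (hl0 : ∀ i ∈ s, 0 ≤ lam i)
    (hl1 : ∑ i ∈ s, lam i = 1) {ε : ℝ} (hε : 0 < ε) :
    ∑ i ∈ s, lam i * absEval (f i) u ≤ absEval (∑ i ∈ s, lam i • f i) u + ε := by
  classical
  set k : ℝ := (s.card : ℝ) with hk
  have hk1 : (1:ℝ) ≤ k := by
    rw [hk]
    exact_mod_cast Finset.card_pos.2 hs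
  set δ : ℝ := ε / (k+1)^2 with hδdef
  have hδ : 0 < δ := by positivity
  have hδε : (k+1)^2 * δ = ε := by
    rw [hδdef]; field_simp
  -- choose decompositions from disjointness
  have Hq : ∀ j ∈ s, ∀ i ∈ s, j ≠ i → ∃ z : E, (0 ≤ z ∧ z ≤ u) ∧
      absEval (f j) z ≤ δ ∧ absEval (f i) (u - z) ≤ δ := by
    intro j hj i hi hij
    have h0 := hd j i hij u hu
    have hne : Nonempty {y : E // 0 ≤ y ∧ y ≤ u} := ⟨⟨0, le_rfl, hu⟩⟩
    have hlt : (⨅ y : {y : E // 0 ≤ y ∧ y ≤ u},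
        (absEval (f j) y.1 + absEval (f i) (u - y.1))) < δ := by rw [h0]; exact hδ
    obtain ⟨⟨z, hz⟩, hzlt⟩ := exists_lt_of_ciInf_lt hlt
    have h1 : 0 ≤ absEval (f j) z := absEval_nonneg _ hz.1
    have h2 : 0 ≤ absEval (f i) (u - z) := absEval_nonneg _ (sub_nonneg.2 hz.2)
    exact ⟨z, hz, by simp at hzlt; constructor <;> linarith⟩
  choose! q hq hqj hqi using Hq
  set w : ℕ → E := fun i => if h : (s.erase i).Nonempty
    then (s.erase i).inf' h (fun j => q j i) else u with hwdef
  have hh0 : ∀ i ∈ s, 0 ≤ w i := by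
    intro i hi
    rw [hwdef]; dsimp only
    split_ifs with h
    · refine Finset.le_inf' h _ fun j hj => ?_
      obtain ⟨hjne, hjs⟩ := Finset.mem_erase.1 hj
      exact (hq j hjs i hi hjne).1
    · exact hu
  have hhu : ∀ i ∈ s, w i ≤ u := by
    intro i hi
    rw [hwdef]; dsimp only
    split_ifs with h
    · obtain ⟨j, hj⟩ := h
      obtain ⟨hjne, hjs⟩ := Finset.mem_erase.1 hj
      exact (Finset.inf'_le _ hj).trans (hq j hjs i hi hjne).2
    · exact le_rfl
  have hwsmall : ∀ i ∈ s, ∀ j ∈ s.erase i, absEval (f j) (w i) ≤ δ := by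
    intro i hi j hj
    obtain ⟨hjne, hjs⟩ := Finset.mem_erase.1 hj
    have h : (s.erase i).Nonempty := ⟨j, hj⟩
    have hwle : w i ≤ q j i := by
      rw [hwdef]; dsimp only; rw [dif_pos h]; exact Finset.inf'_le _ hj
    exact (absEval_mono _ (hq j hjs i hi hjne).1 hwle).trans (hqj j hjs i hi hjne)
  have hrem : ∀ i ∈ s, absEval (f i) (u - w i) ≤ k * δ := by
    intro i hi
    rw [hwdef]; dsimp only
    split_ifs with h
    · rw [aDP_sub_inf'_eq _ h]
      have hle : (s.erase i).sup' h (fun j => u - q j i) ≤ ∑ j ∈ s.erase i, (u - q j i) := by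
        refine Finset.sup'_le _ _ fun j hj => ?_
        refine Finset.single_le_sum (f := fun j => u - q j i) (fun j' hj' => ?_) hj
        obtain ⟨hj'ne, hj's⟩ := Finset.mem_erase.1 hj'
        exact sub_nonneg.2 (hq j' hj's i hi hj'ne).2
      have hnn : ∀ j ∈ s.erase i, (0:E) ≤ u - q j i := by
        intro j hj
        obtain ⟨hjne, hjs⟩ := Finset.mem_erase.1 hj
        exact sub_nonneg.2 (hq j hjs i hi hjne).2
      calc absEval (f i) ((s.erase i).sup' h (fun j => u - q j i))
          ≤ absEval (f i) (∑ j ∈ s.erase i, (u - q j i)) :=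
            absEval_mono _ (Finset.sum_nonneg hnn) hle
        _ ≤ ∑ j ∈ s.erase i, absEval (f i) (u - q j i) := absEval_sum_le _ _ _ hnn
        _ ≤ ∑ _j ∈ s.erase i, δ := by
            refine Finset.sum_le_sum fun j hj => ?_
            obtain ⟨hjne, hjs⟩ := Finset.mem_erase.1 hj
            exact hqi j hjs i hi hjne
        _ = ((s.erase i).card : ℝ) * δ := by rw [Finset.sum_const, nsmul_eq_mul]
        _ ≤ k * δ := by
            refine mul_le_mul_of_nonneg_right ?_ hδ.le
            rw [hk]
            exact_mod_cast Finset.card_le_card (Finset.erase_subset i s)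
    · simpa [sub_self, absEval_zero] using (by positivity : (0:ℝ) ≤ k * δ)
  -- choose near-maximizers
  have Hv : ∀ i ∈ s, ∃ vv : E, |vv| ≤ w i ∧ absEval (f i) (w i) - δ ≤ f i vv := by
    intro i hi
    have hne : Nonempty {y : E // |y| ≤ w i} := ⟨⟨0, by simpa using hh0 i hi⟩⟩
    have hlt : absEval (f i) (w i) - δ < ⨆ y : {y : E // |y| ≤ w i}, f i y.1 := by
      have : absEval (f i) (w i) - δ < absEval (f i) (w i) := by linarith
      exact this
    obtain ⟨⟨vv, hvv⟩, hvlt⟩ := exists_lt_of_lt_ciSup hlt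
    exact ⟨vv, hvv, hvlt.le⟩
  choose! v hv1 hv2 using Hv
  set V : E := ∑ i ∈ s, v i with hV
  have hVabs : |V| ≤ ∑ i ∈ s, w i :=
    le_trans (aDP_abs_sum_le s v) (Finset.sum_le_sum hv1)
  set Eb : E := ∑ i ∈ s, (w i ⊓ ∑ j ∈ s.erase i, w j) with hEb
  have hEb0 : (0:E) ≤ Eb :=
    Finset.sum_nonneg fun i hi => le_inf (hh0 i hi)
      (Finset.sum_nonneg fun j hj => hh0 j (Finset.mem_of_mem_erase hj))
  have hsumw : ∑ i ∈ s, w i ≤ u + Eb := by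
    refine le_trans (aDP_sum_le_sup'_add w s hs hh0) ?_
    have : s.sup' hs w ≤ u := Finset.sup'_le hs w hhu
    exact add_le_add_left this Eb
  set t : E := (V ⊓ u) ⊔ (-u) with ht
  have htu : |t| ≤ u := (aDP_trunc_spec V u hu).1
  have htd := (aDP_trunc_spec V u hu).2
  have hvt : |V - t| ≤ Eb := by
    refine htd.trans (sup_le ?_ hEb0)
    have h1 : |V| - u ≤ (u + Eb) - u := sub_le_sub_right (hVabs.trans hsumw) u
    simpa using h1
  have hEi : ∀ i ∈ s, absEval (f i) Eb ≤ k * (k * δ) := by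
    intro i hi
    have hnn : ∀ j ∈ s, (0:E) ≤ w j ⊓ ∑ j' ∈ s.erase j, w j' := fun j hj =>
      le_inf (hh0 j hj) (Finset.sum_nonneg fun j' hj' => hh0 j' (Finset.mem_of_mem_erase hj'))
    refine le_trans (absEval_sum_le (f i) s _ hnn) ?_
    have hterm : ∀ j ∈ s, absEval (f i) (w j ⊓ ∑ j' ∈ s.erase j, w j') ≤ k * δ := by
      intro j hj
      by_cases hij : j = i
      · subst hij
        refine le_trans (absEval_mono _
          (Finset.sum_nonneg fun j' hj' => hh0 j' (Finset.mem_of_mem_erase hj')) inf_le_right) ?_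
        refine le_trans (absEval_sum_le _ _ _
          (fun j' hj' => hh0 j' (Finset.mem_of_mem_erase hj'))) ?_
        calc ∑ j' ∈ s.erase j, absEval (f j) (w j') ≤ ∑ _j' ∈ s.erase j, δ := by
              refine Finset.sum_le_sum fun j' hj' => ?_
              obtain ⟨hne, hj's⟩ := Finset.mem_erase.1 hj'
              exact hwsmall j' hj's j (Finset.mem_erase.2 ⟨hne.symm, hj⟩)
          _ = ((s.erase j).card : ℝ) * δ := by rw [Finset.sum_const, nsmul_eq_mul]
          _ ≤ k * δ := by
              refine mul_le_mul_of_nonneg_right ?_ hδ.le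
              rw [hk]
              exact_mod_cast Finset.card_le_card (Finset.erase_subset j s)
      · have hle : absEval (f i) (w j) ≤ δ :=
          hwsmall j hj i (Finset.mem_erase.2 ⟨fun hcon => hij hcon.symm, hi⟩)
        have hkδ : δ ≤ k * δ := by nlinarith
        exact le_trans (absEval_mono _ (hh0 j hj) inf_le_left) (hle.trans hkδ)
    calc ∑ j ∈ s, absEval (f i) (w j ⊓ ∑ j' ∈ s.erase j, w j') ≤ ∑ _j ∈ s, k * δ :=
          Finset.sum_le_sum hterm
      _ = k * (k * δ) := by rw [Finset.sum_const, nsmul_eq_mul, ← hk]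
  have hfi : ∀ i ∈ s, absEval (f i) u - (k+1)^2 * δ ≤ f i t := by
    intro i hi
    have e1 : absEval (f i) (w i) - δ ≤ f i (v i) := hv2 i hi
    have e2 : absEval (f i) u ≤ absEval (f i) (w i) + absEval (f i) (u - w i) := by
      have h := absEval_add_le (f i) (hh0 i hi) (sub_nonneg.2 (hhu i hi))
      simpa using h
    have e3 := hrem i hi
    have e4 : |f i (V - t)| ≤ k * (k * δ) := le_trans (abs_le_absEval _ hvt) (hEi i hi)
    have e5 : |∑ j ∈ s.erase i, f i (v j)| ≤ k * δ := by
      refine le_trans (Finset.abs_sum_le_sum_abs _ _) ?_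
      calc ∑ j ∈ s.erase i, |f i (v j)| ≤ ∑ _j ∈ s.erase i, δ := by
            refine Finset.sum_le_sum fun j hj => ?_
            obtain ⟨hjne, hjs⟩ := Finset.mem_erase.1 hj
            refine le_trans (abs_le_absEval _ (hv1 j hjs)) ?_
            exact hwsmall j hjs i (Finset.mem_erase.2 ⟨fun hc => hjne hc.symm, hi⟩)
        _ = ((s.erase i).card : ℝ) * δ := by rw [Finset.sum_const, nsmul_eq_mul]
        _ ≤ k * δ := by
            refine mul_le_mul_of_nonneg_right ?_ hδ.le
            rw [hk]
            exact_mod_cast Finset.card_le_card (Finset.erase_subset i s)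
    have e6 : f i V = f i (v i) + ∑ j ∈ s.erase i, f i (v j) := by
      rw [hV, map_sum, ← Finset.add_sum_erase s _ hi]
    have e7 : f i t = f i V - f i (V - t) := by rw [map_sub]; ring
    have habs4 := abs_le.1 e4
    have habs5 := abs_le.1 e5
    have hring : (k+1)^2 * δ = k * (k*δ) + 2*(k*δ) + δ := by ring
    rw [e7, e6]
    nlinarith [habs4.1, habs5.1, hk1, hδ.le]
  calc ∑ i ∈ s, lam i * absEval (f i) u ≤ ∑ i ∈ s, lam i * (f i t + ε) := by
        refine Finset.sum_le_sum fun i hi => mul_le_mul_of_nonneg_left ?_ (hl0 i hi)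
        have h := hfi i hi
        rw [hδε] at h
        linarith
    _ = (∑ i ∈ s, lam i • f i) t + ε := by
        rw [ContinuousLinearMap.sum_apply]
        simp only [mul_add, Finset.sum_add_distrib, ← Finset.sum_mul, hl1,
          ContinuousLinearMap.coe_smul', Pi.smul_apply, smul_eq_mul, one_mul]
    _ ≤ absEval (∑ i ∈ s, lam i • f i) u + ε := by
        have := le_absEval (∑ i ∈ s, lam i • f i) htu
        linarith

end AuxADP

/-- Every order interval in a Banach lattice is an almost Dunford-Pettis set. -/
theorem orderInterval_almostDP [NormedAddCommGroup E] [Lattice E] [HasSolidNorm E] [IsOrderedAddMonoid E] [NormedSpace ℝ E] [PosSMulStrictMono ℝ E] [PosSMulReflectLT ℝ E] [CompleteSpace E]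
    (x y : E) (hxy : x ≤ y) : AlmostDPSet (Set.Icc x y) := by
  classical
  intro f hd hw
  set u : E := y - x with hudef
  have hu : (0:E) ≤ u := sub_nonneg.2 hxy
  have stepA : Tendsto (fun n => absEval (f n) u) atTop (𝓝 0) := by
    by_contra hcon
    rw [Metric.tendsto_atTop] at hcon
    push_neg at hcon
    obtain ⟨ε, hε, hfreq⟩ := hcon
    have hfreq' : ∃ᶠ n in atTop, ε ≤ absEval (f n) u := by
      rw [Filter.frequently_atTop]
      intro N
      obtain ⟨n, hn, hlt⟩ := hfreq N
      refine ⟨n, hn, ?_⟩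
      rwa [Real.dist_eq, sub_zero, abs_of_nonneg (absEval_nonneg _ hu)] at hlt
    set S : Set ℕ := {n | ε ≤ absEval (f n) u} with hS
    set B : Set (E →L[ℝ] ℝ) := f '' S with hB
    have hhull : ∀ g ∈ convexHull ℝ B, ε/2 ≤ absEval g u := by
      intro g hg
      rw [convexHull_eq] at hg
      obtain ⟨ι, tt, wgt, z, hw0, hw1, hzB, hcm⟩ := hg
      have htne : tt.Nonempty := by
        rw [Finset.nonempty_iff_ne_empty]
        rintro rfl
        simp at hw1
      have hzn : ∀ i ∈ tt, ∃ m, m ∈ S ∧ f m = z i := fun i hi => hzB i hi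
      choose! nn hnS hnf using hzn
      set T : Finset ℕ := tt.image nn with hT
      have hTne : T.Nonempty := htne.image nn
      set μ : ℕ → ℝ := fun m => ∑ i ∈ tt.filter (fun i => nn i = m), wgt i with hμ
      have hμ0 : ∀ m ∈ T, 0 ≤ μ m := fun m _ =>
        Finset.sum_nonneg fun i hi => hw0 i (Finset.mem_of_mem_filter i hi)
      have hmaps : ∀ i ∈ tt, nn i ∈ T := fun i hi => Finset.mem_image_of_mem nn hi
      have hμ1 : ∑ m ∈ T, μ m = 1 := by
        rw [hμ]
        rw [Finset.sum_fiberwise_of_maps_to hmaps wgt]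
        exact hw1
      have hgsum : ∑ m ∈ T, μ m • f m = g := by
        have h1 : ∀ m ∈ T, μ m • f m = ∑ i ∈ tt.filter (fun i => nn i = m), wgt i • z i := by
          intro m hm
          rw [hμ]; dsimp only
          rw [Finset.sum_smul]
          refine Finset.sum_congr rfl fun i hi => ?_
          obtain ⟨hit, hnim⟩ := Finset.mem_filter.1 hi
          rw [← hnim, hnf i hit]
        calc ∑ m ∈ T, μ m • f m
            = ∑ m ∈ T, ∑ i ∈ tt.filter (fun i => nn i = m), wgt i • z i :=
              Finset.sum_congr rfl h1
          _ = ∑ i ∈ tt, wgt i • z i := Finset.sum_fiberwise_of_maps_to hmaps _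
          _ = tt.centerMass wgt z := (Finset.centerMass_eq_of_sum_1 tt z hw1).symm
          _ = g := hcm
      have hkey := key_combination f hd hu T hTne μ hμ0 hμ1 (half_pos hε)
      rw [hgsum] at hkey
      have hlow : ε ≤ ∑ m ∈ T, μ m * absEval (f m) u := by
        calc ε = ∑ m ∈ T, μ m * ε := by rw [← Finset.sum_mul, hμ1, one_mul]
          _ ≤ ∑ m ∈ T, μ m * absEval (f m) u := by
              refine Finset.sum_le_sum fun m hm => ?_
              obtain ⟨i, hit, rfl⟩ := Finset.mem_image.1 hm
              exact mul_le_mul_of_nonneg_left (hnS i hit) (hμ0 _ hm)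
      linarith
    have hlip : ∀ g g' : E →L[ℝ] ℝ, absEval g u ≤ absEval g' u + ‖g - g'‖ * ‖u‖ := by
      intro g g'
      refine Real.iSup_le ?_ (add_nonneg (absEval_nonneg _ hu) (by positivity))
      rintro ⟨vv, hvv⟩
      have h1 : g vv = g' vv + (g - g') vv := by simp
      have h2 : (g - g') vv ≤ ‖g - g'‖ * ‖u‖ := by
        calc (g - g') vv ≤ |(g - g') vv| := le_abs_self _
          _ = ‖(g - g') vv‖ := (Real.norm_eq_abs _).symm
          _ ≤ ‖g - g'‖ * ‖vv‖ := (g - g').le_opNorm vv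
          _ ≤ ‖g - g'‖ * ‖u‖ := by
              have := aDP_norm_le_of_abs_le hvv
              gcongr
      rw [h1]
      exact add_le_add (le_absEval g' hvv) h2
    have hcontF : Continuous fun g : E →L[ℝ] ℝ => absEval g u := by
      refine (LipschitzWith.of_dist_le_mul (K := ‖u‖₊) ?_).continuous
      intro g g'
      rw [Real.dist_eq, dist_eq_norm, coe_nnnorm]
      refine abs_sub_le_iff.2 ⟨?_, ?_⟩
      · have := hlip g g'
        nlinarith [norm_nonneg (g - g'), norm_nonneg u]
      · have := hlip g' g
        rw [norm_sub_rev] at this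
        nlinarith [norm_nonneg (g - g'), norm_nonneg u]
    have hCsub : closure (convexHull ℝ B) ⊆ {g | ε/2 ≤ absEval g u} := by
      refine closure_minimal hhull ?_
      exact isClosed_le continuous_const hcontF
    have h0notin : (0 : E →L[ℝ] ℝ) ∉ closure (convexHull ℝ B) := by
      intro h0
      have h1 := hCsub h0
      simp only [Set.mem_setOf_eq] at h1
      have hz : absEval (0 : E →L[ℝ] ℝ) u = 0 := by
        refine le_antisymm ?_ (absEval_nonneg _ hu)
        exact Real.iSup_le (fun i => by simp) le_rfl
      rw [hz] at h1; linarith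
    obtain ⟨φ, r, hφC, hφ0⟩ := geometric_hahn_banach_closed_point
      ((convex_convexHull ℝ B).closure) isClosed_closure h0notin
    rw [map_zero] at hφ0
    have hev : ∀ᶠ n in atTop, r < φ (f n) := (hw φ).eventually (eventually_gt_nhds hφ0)
    obtain ⟨n, hnS', hnr⟩ := (hfreq'.and_eventually hev).exists
    have hmem : f n ∈ closure (convexHull ℝ B) :=
      subset_closure (subset_convexHull ℝ B ⟨n, hnS', rfl⟩)
    have := hφC _ hmem
    linarith
  have hboundn : ∀ n, ∀ a ∈ Set.Icc x y, |f n a| ≤ |f n x| + absEval (f n) u := by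
    intro n a ha
    have hsplit : f n a = f n x + f n (a - x) := by rw [← map_add]; congr 1; abel
    have habs : |a - x| ≤ u := by
      rw [abs_of_nonneg (sub_nonneg.2 ha.1)]
      exact sub_le_sub_right ha.2 x
    calc |f n a| = |f n x + f n (a - x)| := by rw [hsplit]
      _ ≤ |f n x| + |f n (a - x)| := abs_add_le _ _
      _ ≤ |f n x| + absEval (f n) u := add_le_add_right (abs_le_absEval _ habs) _
  refine squeeze_zero (fun n => Real.iSup_nonneg fun a => abs_nonneg _)
    (fun n => Real.iSup_le (fun a => hboundn n a.1 a.2)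
      (add_nonneg (abs_nonneg _) (absEval_nonneg _ hu))) ?_
  have h1 : Tendsto (fun n => |f n x|) atTop (𝓝 0) := by
    have h2 := (hw (ContinuousLinearMap.apply ℝ ℝ x)).abs
    simpa using h2
  simpa using h1.add stepA
end

section
/- If the bidual E** of a Banach lattice E has order continuous norm, then every almost weakly limited operator from a Banach space X into E is almost limited. -/
open Filter Topology Pointwise

variable {E F G X : Type*}

variable [NormedAddCommGroup E] [Lattice E] [HasSolidNorm E] [IsOrderedAddMonoid E] [NormedSpace ℝ E] in
/-- A weak* null sequence of functionals. -/
def WeakStarNull (f : ℕ → E →L[ℝ] ℝ) : Prop :=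
  ∀ x : E, Tendsto (fun n => f n x) atTop (𝓝 0)

variable [NormedAddCommGroup E] [Lattice E] [HasSolidNorm E] [IsOrderedAddMonoid E] [NormedSpace ℝ E] in
/-- An almost limited set: disjoint weak* null sequences in the dual converge uniformly
to zero on it. -/
def AlmostLimitedSet (A : Set E) : Prop :=
  ∀ f : ℕ → E →L[ℝ] ℝ, DisjointSeqDual f → WeakStarNull f →
    Tendsto (fun n => ⨆ a : A, |f n a.1|) atTop (𝓝 0)

variable [NormedAddCommGroup E] [Lattice E] [HasSolidNorm E] [IsOrderedAddMonoid E] [NormedSpace ℝ E] in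
/-- A positive functional. -/
def PositiveFunctional (f : E →L[ℝ] ℝ) : Prop := ∀ x : E, 0 ≤ x → 0 ≤ f x

variable [NormedAddCommGroup E] [Lattice E] [HasSolidNorm E] [IsOrderedAddMonoid E] [NormedSpace ℝ E] in
/-- The canonical (pre)order on the bidual, induced by the positive cone of the dual. -/
def BidualLe (Φ Ψ : (E →L[ℝ] ℝ) →L[ℝ] ℝ) : Prop :=
  ∀ f : E →L[ℝ] ℝ, PositiveFunctional f → Φ f ≤ Ψ f

/-- Order continuity of the norm of the bidual: every nonempty downward directed subset
of the bidual whose greatest lower bound is `0` contains elements of arbitrarily small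
norm. -/
def BidualOrderContinuousNorm (E : Type*) [NormedAddCommGroup E] [Lattice E] [HasSolidNorm E] [IsOrderedAddMonoid E]
    [NormedSpace ℝ E] : Prop :=
  ∀ S : Set ((E →L[ℝ] ℝ) →L[ℝ] ℝ), S.Nonempty →
    DirectedOn (fun Φ Ψ => BidualLe Ψ Φ) S →
    (∀ Φ ∈ S, BidualLe 0 Φ) →
    (∀ Ψ, (∀ Φ ∈ S, BidualLe Ψ Φ) → BidualLe Ψ 0) →
    ∀ ε > 0, ∃ Φ ∈ S, ‖Φ‖ < ε

namespace ALKit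

variable {E : Type*} [NormedAddCommGroup E] [Lattice E] [HasSolidNorm E] [IsOrderedAddMonoid E] [NormedSpace ℝ E]

/-- The cone order on functionals. -/
def leF (u v : E →L[ℝ] ℝ) : Prop := ∀ x : E, 0 ≤ x → u x ≤ v x

lemma leF_refl (u : E →L[ℝ] ℝ) : leF u u := fun _ _ => le_rfl

lemma leF_trans {u v w : E →L[ℝ] ℝ} (h1 : leF u v) (h2 : leF v w) : leF u w :=
  fun x hx => (h1 x hx).trans (h2 x hx)

lemma leF_add {u v u' v' : E →L[ℝ] ℝ} (h1 : leF u v) (h2 : leF u' v') :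
    leF (u + u') (v + v') := fun x hx => by
  simpa using add_le_add (h1 x hx) (h2 x hx)

lemma eqF {u v : E →L[ℝ] ℝ} (h : ∀ x : E, 0 ≤ x → u x = v x) : u = v := by
  ext x
  have hx : x = x⁺ - x⁻ := (posPart_sub_negPart x).symm
  rw [hx, map_sub, map_sub, h _ (posPart_nonneg x), h _ (negPart_nonneg x)]

lemma leF_antisymm {u v : E →L[ℝ] ℝ} (h1 : leF u v) (h2 : leF v u) : u = v :=
  eqF fun x hx => le_antisymm (h1 x hx) (h2 x hx)

/-- Monotone functionals are bounded on order intervals. -/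
lemma norm_le_of_le_of_nonneg {u v : E →L[ℝ] ℝ} (h0 : leF 0 u) (h : leF u v) (x : E) :
    |u x| ≤ ‖v‖ * ‖x‖ := by
  have hb : ∀ z : E, 0 ≤ z → u z ≤ ‖v‖ * ‖x‖ → True := fun _ _ _ => trivial
  have key : ∀ z : E, 0 ≤ z → |z| ≤ |x| → u z ≤ ‖v‖ * ‖x‖ := by
    intro z hz hzx
    calc u z ≤ v z := h z hz
    _ ≤ |v z| := le_abs_self _
    _ ≤ ‖v‖ * ‖z‖ := v.le_opNorm z
    _ ≤ ‖v‖ * ‖x‖ := by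
        have := norm_le_norm_of_abs_le_abs hzx
        exact mul_le_mul_of_nonneg_left this (norm_nonneg v)
  have h1 : u x⁺ ≤ ‖v‖ * ‖x‖ := key _ (posPart_nonneg x) (by
    rw [abs_of_nonneg (posPart_nonneg x)]
    rw [posPart_def]; exact sup_le (le_abs_self x) (abs_nonneg x))
  have h2 : u x⁻ ≤ ‖v‖ * ‖x‖ := key _ (negPart_nonneg x) (by
    rw [abs_of_nonneg (negPart_nonneg x)]
    rw [negPart_def]; exact sup_le (neg_le_abs x) (abs_nonneg x))
  have h1' : 0 ≤ u x⁺ := by simpa using h0 _ (posPart_nonneg x)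
  have h2' : 0 ≤ u x⁻ := by simpa using h0 _ (negPart_nonneg x)
  have hx : u x = u x⁺ - u x⁻ := by
    conv_lhs => rw [← posPart_sub_negPart x]
    rw [map_sub]
  rw [hx, abs_sub_le_iff]
  constructor <;> linarith

section pre

/-- `sup {f y : 0 ≤ y ≤ x}`. -/
noncomputable def pre (f : E →L[ℝ] ℝ) (x : E) : ℝ := sSup (f '' Set.Icc 0 x)

lemma pre_bddAbove (f : E →L[ℝ] ℝ) (x : E) : BddAbove (f '' Set.Icc 0 x) := by
  refine ⟨‖f‖ * ‖x‖, ?_⟩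
  rintro r ⟨y, hy, rfl⟩
  calc f y ≤ |f y| := le_abs_self _
  _ ≤ ‖f‖ * ‖y‖ := f.le_opNorm y
  _ ≤ ‖f‖ * ‖x‖ := by
      refine mul_le_mul_of_nonneg_left ?_ (norm_nonneg f)
      refine norm_le_norm_of_abs_le_abs ?_
      rw [abs_of_nonneg hy.1]
      exact hy.2.trans (le_abs_self x)

lemma pre_mem_le (f : E →L[ℝ] ℝ) {x y : E} (hy : y ∈ Set.Icc 0 x) : f y ≤ pre f x :=
  le_csSup (pre_bddAbove f x) ⟨y, hy, rfl⟩

lemma pre_nonneg (f : E →L[ℝ] ℝ) {x : E} (hx : 0 ≤ x) : 0 ≤ pre f x := by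
  simpa using pre_mem_le f (x := x) (y := 0) ⟨le_rfl, hx⟩

lemma pre_self_le (f : E →L[ℝ] ℝ) {x : E} (hx : 0 ≤ x) : f x ≤ pre f x :=
  pre_mem_le f ⟨hx, le_rfl⟩

lemma pre_zero (f : E →L[ℝ] ℝ) : pre f 0 = 0 := by
  simp [pre, Set.Icc_self]

lemma pre_le_opBound (f : E →L[ℝ] ℝ) {x : E} (hx : 0 ≤ x) : pre f x ≤ ‖f‖ * ‖x‖ := by
  refine csSup_le ⟨f 0, 0, ⟨le_rfl, hx⟩, rfl⟩ ?_
  rintro r ⟨y, hy, rfl⟩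
  calc f y ≤ |f y| := le_abs_self _
  _ ≤ ‖f‖ * ‖y‖ := f.le_opNorm y
  _ ≤ ‖f‖ * ‖x‖ := by
      refine mul_le_mul_of_nonneg_left ?_ (norm_nonneg f)
      refine norm_le_norm_of_abs_le_abs ?_
      rw [abs_of_nonneg hy.1]
      exact hy.2.trans (le_abs_self x)

lemma pre_le (f : E →L[ℝ] ℝ) {x : E} (hx : 0 ≤ x) {g : E →L[ℝ] ℝ}
    (hg0 : leF 0 g) (hfg : leF f g) : pre f x ≤ g x := by
  refine csSup_le ⟨f 0, 0, ⟨le_rfl, hx⟩, rfl⟩ ?_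
  rintro r ⟨y, hy, rfl⟩
  calc f y ≤ g y := hfg y hy.1
  _ ≤ g x := by
      have : (0:ℝ) ≤ g (x - y) := by simpa using hg0 (x - y) (sub_nonneg.2 hy.2)
      rw [map_sub] at this; linarith

lemma pre_add (f : E →L[ℝ] ℝ) {x y : E} (hx : 0 ≤ x) (hy : 0 ≤ y) :
    pre f (x + y) = pre f x + pre f y := by
  refine le_antisymm ?_ ?_
  · refine csSup_le ⟨f 0, 0, ⟨le_rfl, by positivity⟩, rfl⟩ ?_
    rintro r ⟨z, hz, rfl⟩
    have h1 : z ⊓ x ∈ Set.Icc (0:E) x := ⟨le_inf hz.1 hx, inf_le_right⟩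
    have h2 : z - z ⊓ x ∈ Set.Icc (0:E) y := by
      constructor
      · simpa using inf_le_left (a := z) (b := x)
      · have : z - z ⊓ x = (z - z) ⊔ (z - x) := sub_inf z x z
        rw [this]
        simp only [sub_self]
        exact sup_le hy (by
          have := hz.2
          rwa [sub_le_iff_le_add, add_comm])
    have : f z = f (z ⊓ x) + f (z - z ⊓ x) := by rw [map_sub]; ring
    rw [this]
    exact add_le_add (pre_mem_le f h1) (pre_mem_le f h2)
  · have key : ∀ a ∈ Set.Icc (0:E) x, ∀ b ∈ Set.Icc (0:E) y,
        f a + f b ≤ pre f (x + y) := by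
      intro a ha b hb
      have : f a + f b = f (a + b) := (map_add f a b).symm
      rw [this]
      exact pre_mem_le f ⟨add_nonneg ha.1 hb.1, add_le_add ha.2 hb.2⟩
    have h1 : pre f x ≤ pre f (x + y) - pre f y := by
      refine csSup_le ⟨f 0, 0, ⟨le_rfl, hx⟩, rfl⟩ ?_
      rintro r ⟨a, ha, rfl⟩
      rw [le_sub_iff_add_le]
      have h2 : pre f y ≤ pre f (x + y) - f a := by
        refine csSup_le ⟨f 0, 0, ⟨le_rfl, hy⟩, rfl⟩ ?_
        rintro s ⟨b, hb, rfl⟩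
        have := key a ha b hb; linarith
      linarith
    linarith

end pre

section posF

/-- Well-definedness of extension from the cone. -/
lemma pre_wd (f : E →L[ℝ] ℝ) {a b c d : E} (h : a - b = c - d)
    (ha : 0 ≤ a) (hb : 0 ≤ b) (hc : 0 ≤ c) (hd : 0 ≤ d) :
    pre f a - pre f b = pre f c - pre f d := by
  have hsum : a + d = c + b := sub_eq_sub_iff_add_eq_add.mp h
  have h1 := pre_add f ha hd
  have h2 := pre_add f hc hb
  rw [hsum] at h1
  linarith

/-- The underlying function of the positive part. -/
noncomputable def preP (f : E →L[ℝ] ℝ) (x : E) : ℝ := pre f x⁺ - pre f x⁻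

lemma preP_add (f : E →L[ℝ] ℝ) (x y : E) : preP f (x + y) = preP f x + preP f y := by
  have hdec : (x + y)⁺ - (x + y)⁻ = (x⁺ + y⁺) - (x⁻ + y⁻) := by
    rw [posPart_sub_negPart]
    rw [show x⁺ + y⁺ - (x⁻ + y⁻) = (x⁺ - x⁻) + (y⁺ - y⁻) by abel]
    rw [posPart_sub_negPart, posPart_sub_negPart]
  have h := pre_wd f hdec (posPart_nonneg _) (negPart_nonneg _)
    (add_nonneg (posPart_nonneg _) (posPart_nonneg _))
    (add_nonneg (negPart_nonneg _) (negPart_nonneg _))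
  unfold preP
  rw [h, pre_add f (posPart_nonneg x) (posPart_nonneg y),
    pre_add f (negPart_nonneg x) (negPart_nonneg y)]
  ring

lemma preP_bound (f : E →L[ℝ] ℝ) (x : E) : |preP f x| ≤ ‖f‖ * ‖x‖ := by
  have h1 : pre f x⁺ ≤ ‖f‖ * ‖x‖ := by
    refine (pre_le_opBound f (posPart_nonneg x)).trans ?_
    refine mul_le_mul_of_nonneg_left ?_ (norm_nonneg f)
    refine norm_le_norm_of_abs_le_abs ?_
    rw [abs_of_nonneg (posPart_nonneg x), posPart_def]
    exact sup_le (le_abs_self x) (abs_nonneg x)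
  have h2 : pre f x⁻ ≤ ‖f‖ * ‖x‖ := by
    refine (pre_le_opBound f (negPart_nonneg x)).trans ?_
    refine mul_le_mul_of_nonneg_left ?_ (norm_nonneg f)
    refine norm_le_norm_of_abs_le_abs ?_
    rw [abs_of_nonneg (negPart_nonneg x), negPart_def]
    exact sup_le (neg_le_abs x) (abs_nonneg x)
  have h3 : 0 ≤ pre f x⁺ := pre_nonneg f (posPart_nonneg x)
  have h4 : 0 ≤ pre f x⁻ := pre_nonneg f (negPart_nonneg x)
  rw [preP, abs_sub_le_iff]
  constructor <;> linarith

/-- The positive part of a functional, as a continuous linear map. -/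
noncomputable def posF (f : E →L[ℝ] ℝ) : E →L[ℝ] ℝ :=
  AddMonoidHom.toRealLinearMap (AddMonoidHom.mk' (preP f) (preP_add f))
    (by
      have hC : (0:ℝ) ≤ ‖f‖ := norm_nonneg f
      refine (LipschitzWith.of_dist_le_mul (K := ‖f‖.toNNReal) ?_).continuous
      intro a b
      rw [Real.coe_toNNReal _ hC, dist_eq_norm, dist_eq_norm]
      simp only [AddMonoidHom.mk'_apply]
      have : preP f a - preP f b = preP f (a - b) := by
        have := preP_add f (a - b) b
        simp only [sub_add_cancel] at this
        linarith
      rw [Real.norm_eq_abs, this]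
      simpa [Real.norm_eq_abs] using preP_bound f (a - b))

lemma posF_apply (f : E →L[ℝ] ℝ) (x : E) : posF f x = pre f x⁺ - pre f x⁻ := rfl

lemma posF_apply_nonneg (f : E →L[ℝ] ℝ) {x : E} (hx : 0 ≤ x) : posF f x = pre f x := by
  rw [posF_apply, posPart_of_nonneg hx, negPart_of_nonneg hx, pre_zero, sub_zero]

lemma posF_nonneg (f : E →L[ℝ] ℝ) : leF 0 (posF f) := by
  intro x hx
  rw [posF_apply_nonneg f hx]
  simpa using pre_nonneg f hx

lemma posF_ge (f : E →L[ℝ] ℝ) : leF f (posF f) := by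
  intro x hx
  rw [posF_apply_nonneg f hx]
  exact pre_self_le f hx

lemma posF_min {f g : E →L[ℝ] ℝ} (hg0 : leF 0 g) (hfg : leF f g) : leF (posF f) g := by
  intro x hx
  rw [posF_apply_nonneg f hx]
  exact pre_le f hx hg0 hfg

lemma posF_norm_le (f : E →L[ℝ] ℝ) : ‖posF f‖ ≤ ‖f‖ := by
  refine ContinuousLinearMap.opNorm_le_bound _ (norm_nonneg f) fun x => ?_
  rw [Real.norm_eq_abs]
  exact preP_bound f x

lemma posF_eq_self {f : E →L[ℝ] ℝ} (hf : leF 0 f) : posF f = f :=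
  leF_antisymm (posF_min hf (leF_refl f)) (posF_ge f)

lemma posF_neg_of_nonneg {f : E →L[ℝ] ℝ} (hf : leF 0 f) : posF (-f) = 0 := by
  refine leF_antisymm (posF_min (leF_refl 0) ?_) (posF_nonneg _)
  intro x hx
  simpa using hf x hx

/-- `f⁺ - f = (-f)⁺`. -/
lemma posF_sub_self (f : E →L[ℝ] ℝ) : posF f - f = posF (-f) := by
  refine leF_antisymm ?_ ?_
  · -- posF f - f ≤ posF (-f)  ⟺  posF f ≤ posF (-f) + f
    have : leF (posF f) (posF (-f) + f) := by
      refine posF_min ?_ ?_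
      · intro x hx
        have h1 := posF_ge (-f) x hx
        simp only [ContinuousLinearMap.neg_apply] at h1
        have h2 : (0:ℝ) ≤ posF (-f) x := by simpa using posF_nonneg (-f) x hx
        simp only [ContinuousLinearMap.zero_apply, ContinuousLinearMap.add_apply]
        linarith
      · intro x hx
        have h2 : (0:ℝ) ≤ posF (-f) x := by simpa using posF_nonneg (-f) x hx
        simp only [ContinuousLinearMap.add_apply]
        linarith
    intro x hx
    have := this x hx
    simp only [ContinuousLinearMap.add_apply] at this
    simp only [ContinuousLinearMap.sub_apply]
    linarith
  · -- posF (-f) ≤ posF f - f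
    have : leF (posF (-f)) (posF f - f) := by
      refine posF_min ?_ ?_
      · intro x hx
        have h1 := posF_ge f x hx
        have h2 : (0:ℝ) ≤ posF f x := by simpa using posF_nonneg f x hx
        simp only [ContinuousLinearMap.zero_apply, ContinuousLinearMap.sub_apply]
        linarith
      · intro x hx
        have h2 : (0:ℝ) ≤ posF f x := by simpa using posF_nonneg f x hx
        simp only [ContinuousLinearMap.neg_apply, ContinuousLinearMap.sub_apply]
        linarith
    exact this

lemma posF_decomp (f : E →L[ℝ] ℝ) : posF f - posF (-f) = f := by
  rw [← posF_sub_self f]; abel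

end posF

section latticeF

/-- Infimum of two functionals. -/
noncomputable def infF (f g : E →L[ℝ] ℝ) : E →L[ℝ] ℝ := f - posF (f - g)

/-- Supremum of two functionals. -/
noncomputable def supF (f g : E →L[ℝ] ℝ) : E →L[ℝ] ℝ := g + posF (f - g)

lemma infF_add_supF (f g : E →L[ℝ] ℝ) : infF f g + supF f g = f + g := by
  unfold infF supF; abel

lemma infF_le_left (f g : E →L[ℝ] ℝ) : leF (infF f g) f := by
  intro x hx
  have := posF_nonneg (f - g) x hx
  simp only [ContinuousLinearMap.zero_apply] at this
  simp only [infF, ContinuousLinearMap.sub_apply]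
  linarith

lemma infF_le_right (f g : E →L[ℝ] ℝ) : leF (infF f g) g := by
  intro x hx
  have := posF_ge (f - g) x hx
  simp only [ContinuousLinearMap.sub_apply] at this
  simp only [infF, ContinuousLinearMap.sub_apply]
  linarith

lemma le_infF {f g w : E →L[ℝ] ℝ} (h1 : leF w f) (h2 : leF w g) : leF w (infF f g) := by
  have key : leF (posF (f - g)) (f - w) := by
    refine posF_min ?_ ?_
    · intro x hx
      have := h1 x hx
      simp only [ContinuousLinearMap.zero_apply, ContinuousLinearMap.sub_apply]
      linarith
    · intro x hx
      have := h2 x hx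
      simp only [ContinuousLinearMap.sub_apply]
      linarith
  intro x hx
  have := key x hx
  simp only [ContinuousLinearMap.sub_apply] at this
  simp only [infF, ContinuousLinearMap.sub_apply]
  linarith

lemma infF_nonneg {f g : E →L[ℝ] ℝ} (hf : leF 0 f) (hg : leF 0 g) : leF 0 (infF f g) :=
  le_infF hf hg

lemma supF_le {f g w : E →L[ℝ] ℝ} (h1 : leF f w) (h2 : leF g w) : leF (supF f g) w := by
  have key : leF (posF (f - g)) (w - g) := by
    refine posF_min ?_ ?_
    · intro x hx
      have := h2 x hx
      simp only [ContinuousLinearMap.zero_apply, ContinuousLinearMap.sub_apply]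
      linarith
    · intro x hx
      have := h1 x hx
      simp only [ContinuousLinearMap.sub_apply]
      linarith
  intro x hx
  have := key x hx
  simp only [ContinuousLinearMap.sub_apply] at this
  simp only [supF, ContinuousLinearMap.add_apply]
  linarith

lemma infF_mono {f g f' g' : E →L[ℝ] ℝ} (h1 : leF f f') (h2 : leF g g') :
    leF (infF f g) (infF f' g') :=
  le_infF (leF_trans (infF_le_left f g) h1) (leF_trans (infF_le_right f g) h2)

lemma infF_comm_le (f g : E →L[ℝ] ℝ) : leF (infF f g) (infF g f) :=
  le_infF (infF_le_right f g) (infF_le_left f g)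

/-- `(f + g) ⊓ z ≤ f ⊓ z + g ⊓ z` for positive `f, g, z`. -/
lemma infF_add_le {f g z : E →L[ℝ] ℝ} (hf : leF 0 f) (hg : leF 0 g) (hz : leF 0 z) :
    leF (infF (f + g) z) (infF f z + infF g z) := by
  set d := infF (f + g) z with hd
  -- first: d - g ≤ infF f z  (since d - g ≤ f and d - g ≤ z)
  have step1 : leF (d - g) (infF f z) := by
    refine le_infF ?_ ?_
    · intro x hx
      have h1 := infF_le_left (f + g) z x hx
      simp only [ContinuousLinearMap.add_apply] at h1
      simp only [ContinuousLinearMap.sub_apply]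
      linarith
    · intro x hx
      have h1 := infF_le_right (f + g) z x hx
      have h2 := hg x hx
      simp only [ContinuousLinearMap.zero_apply] at h2
      simp only [ContinuousLinearMap.sub_apply]
      linarith
  -- hence w := d - infF f z ≤ g; also w ≤ z; so w ≤ infF g z
  have step2 : leF (d - infF f z) (infF g z) := by
    refine le_infF ?_ ?_
    · intro x hx
      have := step1 x hx
      simp only [ContinuousLinearMap.sub_apply] at this ⊢
      linarith
    · intro x hx
      have h1 := infF_le_right (f + g) z x hx
      have h2 : (0:ℝ) ≤ infF f z x := by simpa using infF_nonneg hf hz x hx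
      simp only [ContinuousLinearMap.sub_apply]
      linarith
  intro x hx
  have := step2 x hx
  simp only [ContinuousLinearMap.sub_apply] at this
  simp only [ContinuousLinearMap.add_apply]
  linarith

lemma leF_nsmul {h : E →L[ℝ] ℝ} (hh : leF 0 h) {m n : ℕ} (hmn : m ≤ n) :
    leF ((m:ℝ) • h) ((n:ℝ) • h) := by
  intro x hx
  have h1 := hh x hx
  simp only [ContinuousLinearMap.zero_apply] at h1
  simp only [ContinuousLinearMap.smul_apply, smul_eq_mul]
  have h2 : (m:ℝ) ≤ (n:ℝ) := by exact_mod_cast hmn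
  nlinarith

lemma leF_nsmul_nonneg {h : E →L[ℝ] ℝ} (hh : leF 0 h) (m : ℕ) : leF 0 ((m:ℝ) • h) := by
  intro x hx
  have := hh x hx
  simp only [ContinuousLinearMap.zero_apply] at this ⊢
  simp only [ContinuousLinearMap.smul_apply, smul_eq_mul]
  positivity

end latticeF


section disjoint

lemma leF_zero_add {f g : E →L[ℝ] ℝ} (hf : leF 0 f) (hg : leF 0 g) : leF 0 (f + g) := by
  intro x hx
  have h1 := hf x hx; have h2 := hg x hx
  simp only [ContinuousLinearMap.zero_apply] at h1 h2 ⊢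
  simp only [ContinuousLinearMap.add_apply]
  linarith

lemma leF_zero_sum (c : ℕ → E →L[ℝ] ℝ) (hpos : ∀ k, leF 0 (c k)) (s : Finset ℕ) :
    leF 0 (∑ k ∈ s, c k) := by
  intro x hx
  simp only [ContinuousLinearMap.zero_apply, ContinuousLinearMap.sum_apply]
  refine Finset.sum_nonneg fun k _ => ?_
  simpa using hpos k x hx

/-- The pointwise-zero-on-the-cone notion of disjointness. -/
def disjF (f g : E →L[ℝ] ℝ) : Prop := ∀ x : E, 0 ≤ x → infF f g x = 0

lemma disjF_of_leF {f g f' g' : E →L[ℝ] ℝ} (hf : leF 0 f) (hg : leF 0 g)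
    (h1 : leF f f') (h2 : leF g g') (hd : disjF f' g') : disjF f g := by
  intro x hx
  have hub := infF_mono h1 h2 x hx
  have hlb := infF_nonneg hf hg x hx
  simp only [ContinuousLinearMap.zero_apply] at hlb
  rw [hd x hx] at hub
  linarith

lemma disjF_symm {f g : E →L[ℝ] ℝ} (hf : leF 0 f) (hg : leF 0 g) (hd : disjF f g) :
    disjF g f := by
  intro x hx
  have hub := infF_comm_le g f x hx
  have hlb := infF_nonneg hg hf x hx
  simp only [ContinuousLinearMap.zero_apply] at hlb
  rw [hd x hx] at hub
  linarith

lemma disjF_zero_left {g : E →L[ℝ] ℝ} (hg : leF 0 g) : disjF 0 g := by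
  intro x hx
  have h1 := infF_le_left 0 g x hx
  have h2 := infF_nonneg (leF_refl 0) hg x hx
  simp only [ContinuousLinearMap.zero_apply] at h1 h2
  linarith

lemma disjF_add {f g z : E →L[ℝ] ℝ} (hf : leF 0 f) (hg : leF 0 g) (hz : leF 0 z)
    (h1 : disjF f z) (h2 : disjF g z) : disjF (f + g) z := by
  intro x hx
  have hub := infF_add_le hf hg hz x hx
  have hlb := infF_nonneg (leF_zero_add hf hg) hz x hx
  simp only [ContinuousLinearMap.zero_apply] at hlb
  simp only [ContinuousLinearMap.add_apply] at hub
  rw [h1 x hx, h2 x hx] at hub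
  linarith

lemma disjF_nsmul_left {f g : E →L[ℝ] ℝ} (hf : leF 0 f) (hg : leF 0 g) (hd : disjF f g)
    (m : ℕ) : disjF ((m:ℝ) • f) g := by
  induction m with
  | zero => simpa using disjF_zero_left hg
  | succ k ih =>
      have hcast : ((k+1:ℕ):ℝ) • f = (k:ℝ) • f + f := by
        push_cast
        rw [add_smul, one_smul]
      rw [hcast]
      exact disjF_add (leF_nsmul_nonneg hf k) hf hg ih hd

lemma disjF_nsmul {f g : E →L[ℝ] ℝ} (hf : leF 0 f) (hg : leF 0 g) (hd : disjF f g)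
    (m n : ℕ) : disjF ((m:ℝ) • f) ((n:ℝ) • g) := by
  have h1 : disjF ((m:ℝ) • f) g := disjF_nsmul_left hf hg hd m
  have h2 : disjF g ((m:ℝ) • f) := disjF_symm (leF_nsmul_nonneg hf m) hg h1
  have h3 : disjF ((n:ℝ) • g) ((m:ℝ) • f) :=
    disjF_nsmul_left hg (leF_nsmul_nonneg hf m) h2 n
  exact disjF_symm (leF_nsmul_nonneg hg n) (leF_nsmul_nonneg hf m) h3

lemma infF_sum_le (c : ℕ → E →L[ℝ] ℝ) (z : E →L[ℝ] ℝ) (hz : leF 0 z)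
    (hpos : ∀ k, leF 0 (c k)) (K : ℕ) :
    leF (infF (∑ k ∈ Finset.range K, c k) z) (∑ k ∈ Finset.range K, infF (c k) z) := by
  induction K with
  | zero =>
      simp only [Finset.range_zero, Finset.sum_empty]
      exact fun x hx => by simpa using infF_le_left 0 z x hx
  | succ K ih =>
      rw [Finset.sum_range_succ, Finset.sum_range_succ]
      have hs : leF 0 (∑ k ∈ Finset.range K, c k) := leF_zero_sum c hpos _
      exact leF_trans (infF_add_le hs (hpos K) hz) (leF_add ih (leF_refl _))

lemma sum_disjoint_le {g : E →L[ℝ] ℝ} (hg : leF 0 g) (c : ℕ → E →L[ℝ] ℝ)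
    (hpos : ∀ k, leF 0 (c k)) (hle : ∀ k, leF (c k) g)
    (hdisj : ∀ k l, k ≠ l → disjF (c k) (c l)) (K : ℕ) :
    leF (∑ k ∈ Finset.range K, c k) g := by
  induction K with
  | zero =>
      simp only [Finset.range_zero, Finset.sum_empty]
      exact hg
  | succ K ih =>
      rw [Finset.sum_range_succ]
      set s := ∑ k ∈ Finset.range K, c k with hs
      have hs0 : leF 0 s := leF_zero_sum c hpos _
      have hdisjs : disjF s (c K) := by
        intro x hx
        have h1 := infF_sum_le c (c K) (hpos K) hpos K x hx
        have h2 : (∑ k ∈ Finset.range K, infF (c k) (c K)) x = 0 := by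
          simp only [ContinuousLinearMap.sum_apply]
          refine Finset.sum_eq_zero fun k hk => ?_
          exact hdisj k K (Nat.ne_of_lt (Finset.mem_range.mp hk)) x hx
        have h3 := infF_nonneg hs0 (hpos K) x hx
        simp only [ContinuousLinearMap.zero_apply] at h3
        rw [← hs] at h1
        rw [h2] at h1
        linarith
      intro x hx
      have hkey : s x + c K x = infF s (c K) x + supF s (c K) x := by
        have := congrArg (fun (u : E →L[ℝ] ℝ) => u x) (infF_add_supF s (c K))
        simp only [ContinuousLinearMap.add_apply] at this
        linarith
      have hsup := supF_le ih (hle K) x hx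
      have hz := hdisjs x hx
      simp only [ContinuousLinearMap.add_apply]
      linarith

end disjoint

section level2

/-- The order interval `[0, g]` in the dual. -/
def posSet (g : E →L[ℝ] ℝ) : Set (E →L[ℝ] ℝ) := {u | leF 0 u ∧ leF u g}

lemma norm_le_of_mem_posSet {g u : E →L[ℝ] ℝ} (hu : u ∈ posSet g) : ‖u‖ ≤ ‖g‖ := by
  refine ContinuousLinearMap.opNorm_le_bound _ (norm_nonneg g) fun x => ?_
  rw [Real.norm_eq_abs]
  exact norm_le_of_le_of_nonneg hu.1 hu.2 x

variable (φ : (E →L[ℝ] ℝ) →L[ℝ] ℝ)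

/-- Riesz-Kantorovich value of `φ⁺` at a positive `g`. -/
noncomputable def pre2 (g : E →L[ℝ] ℝ) : ℝ := sSup (φ '' posSet g)

lemma pre2_bddAbove (g : E →L[ℝ] ℝ) : BddAbove (φ '' posSet g) := by
  refine ⟨‖φ‖ * ‖g‖, ?_⟩
  rintro r ⟨u, hu, rfl⟩
  calc φ u ≤ |φ u| := le_abs_self _
  _ ≤ ‖φ‖ * ‖u‖ := φ.le_opNorm u
  _ ≤ ‖φ‖ * ‖g‖ := mul_le_mul_of_nonneg_left (norm_le_of_mem_posSet hu) (norm_nonneg φ)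

lemma zero_mem_posSet {g : E →L[ℝ] ℝ} (hg : leF 0 g) : (0 : E →L[ℝ] ℝ) ∈ posSet g :=
  ⟨leF_refl 0, hg⟩

lemma pre2_mem_le {g u : E →L[ℝ] ℝ} (hu : u ∈ posSet g) : φ u ≤ pre2 φ g :=
  le_csSup (pre2_bddAbove φ g) ⟨u, hu, rfl⟩

lemma pre2_nonneg {g : E →L[ℝ] ℝ} (hg : leF 0 g) : 0 ≤ pre2 φ g := by
  simpa using pre2_mem_le φ (zero_mem_posSet hg)

lemma pre2_le_opBound {g : E →L[ℝ] ℝ} (hg : leF 0 g) : pre2 φ g ≤ ‖φ‖ * ‖g‖ := by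
  refine csSup_le ⟨φ 0, 0, zero_mem_posSet hg, rfl⟩ ?_
  rintro r ⟨u, hu, rfl⟩
  calc φ u ≤ |φ u| := le_abs_self _
  _ ≤ ‖φ‖ * ‖u‖ := φ.le_opNorm u
  _ ≤ ‖φ‖ * ‖g‖ := mul_le_mul_of_nonneg_left (norm_le_of_mem_posSet hu) (norm_nonneg φ)

lemma pre2_mono {g g' : E →L[ℝ] ℝ} (hg : leF 0 g) (h : leF g g') :
    pre2 φ g ≤ pre2 φ g' := by
  refine csSup_le_csSup (pre2_bddAbove φ g') ⟨φ 0, 0, zero_mem_posSet hg, rfl⟩ ?_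
  rintro r ⟨u, hu, rfl⟩
  exact ⟨u, ⟨hu.1, leF_trans hu.2 h⟩, rfl⟩

lemma pre2_add {g1 g2 : E →L[ℝ] ℝ} (hg1 : leF 0 g1) (hg2 : leF 0 g2) :
    pre2 φ (g1 + g2) = pre2 φ g1 + pre2 φ g2 := by
  refine le_antisymm ?_ ?_
  · refine csSup_le ⟨φ 0, 0, zero_mem_posSet (leF_zero_add hg1 hg2), rfl⟩ ?_
    rintro r ⟨u, hu, rfl⟩
    have hdecomp : u = infF u g1 + posF (u - g1) := by
      unfold infF; abel
    have hmem1 : infF u g1 ∈ posSet g1 := ⟨infF_nonneg hu.1 hg1, infF_le_right u g1⟩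
    have hmem2 : posF (u - g1) ∈ posSet g2 := by
      refine ⟨posF_nonneg _, posF_min hg2 ?_⟩
      intro x hx
      have h1 := hu.2 x hx
      simp only [ContinuousLinearMap.add_apply] at h1
      simp only [ContinuousLinearMap.sub_apply]
      linarith
    calc φ u = φ (infF u g1) + φ (posF (u - g1)) := by rw [← map_add]; rw [← hdecomp]
    _ ≤ pre2 φ g1 + pre2 φ g2 := add_le_add (pre2_mem_le φ hmem1) (pre2_mem_le φ hmem2)
  · have h1 : pre2 φ g1 ≤ pre2 φ (g1 + g2) - pre2 φ g2 := by
      refine csSup_le ⟨φ 0, 0, zero_mem_posSet hg1, rfl⟩ ?_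
      rintro r ⟨u, hu, rfl⟩
      rw [le_sub_iff_add_le]
      have h2 : pre2 φ g2 ≤ pre2 φ (g1 + g2) - φ u := by
        refine csSup_le ⟨φ 0, 0, zero_mem_posSet hg2, rfl⟩ ?_
        rintro s ⟨v, hv, rfl⟩
        rw [le_sub_iff_add_le, add_comm]
        rw [← map_add]
        exact pre2_mem_le φ ⟨leF_zero_add hu.1 hv.1, leF_add hu.2 hv.2⟩
      linarith
    linarith

/-- The "absolute value" of `φ` evaluated on positive functionals. -/
noncomputable def psi (g : E →L[ℝ] ℝ) : ℝ := pre2 φ g + pre2 (-φ) g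

lemma psi_nonneg {g : E →L[ℝ] ℝ} (hg : leF 0 g) : 0 ≤ psi φ g :=
  add_nonneg (pre2_nonneg φ hg) (pre2_nonneg (-φ) hg)

lemma psi_mono {g g' : E →L[ℝ] ℝ} (hg : leF 0 g) (h : leF g g') :
    psi φ g ≤ psi φ g' :=
  add_le_add (pre2_mono φ hg h) (pre2_mono (-φ) hg h)

lemma psi_add {g1 g2 : E →L[ℝ] ℝ} (hg1 : leF 0 g1) (hg2 : leF 0 g2) :
    psi φ (g1 + g2) = psi φ g1 + psi φ g2 := by
  unfold psi
  rw [pre2_add φ hg1 hg2, pre2_add (-φ) hg1 hg2]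
  ring

lemma psi_zero : psi φ 0 = 0 := by
  have h := psi_add φ (leF_refl 0) (leF_refl 0)
  simp only [add_zero] at h
  linarith

lemma psi_le_opBound {g : E →L[ℝ] ℝ} (hg : leF 0 g) : psi φ g ≤ 2 * ‖φ‖ * ‖g‖ := by
  have h1 := pre2_le_opBound φ hg
  have h2 := pre2_le_opBound (-φ) hg
  rw [norm_neg φ] at h2
  unfold psi
  linarith

/-- The modulus of a dual element. -/
noncomputable def absF (f : E →L[ℝ] ℝ) : E →L[ℝ] ℝ := posF f + posF (-f)

lemma absF_nonneg (f : E →L[ℝ] ℝ) : leF 0 (absF f) :=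
  leF_zero_add (posF_nonneg f) (posF_nonneg (-f))

lemma absF_norm_le (f : E →L[ℝ] ℝ) : ‖absF f‖ ≤ 2 * ‖f‖ := by
  calc ‖absF f‖ ≤ ‖posF f‖ + ‖posF (-f)‖ := norm_add_le _ _
  _ ≤ ‖f‖ + ‖-f‖ := add_le_add (posF_norm_le f) (posF_norm_le (-f))
  _ = 2 * ‖f‖ := by rw [norm_neg]; ring

lemma abs_apply_le_psi_absF (f : E →L[ℝ] ℝ) : |φ f| ≤ psi φ (absF f) := by
  set u := (2⁻¹ : ℝ) • (absF f + f) with hu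
  set v := (2⁻¹ : ℝ) • (absF f - f) with hv
  have huv : u - v = f := by
    rw [hu, hv, ← smul_sub (2⁻¹ : ℝ) (absF f + f) (absF f - f)]
    rw [show absF f + f - (absF f - f) = (2:ℝ) • f by
      rw [two_smul]; abel]
    rw [smul_smul]
    norm_num
  have hu_mem : u ∈ posSet (absF f) := by
    constructor
    · intro x hx
      have h1 := posF_ge (-f) x hx
      have h2 : (0:ℝ) ≤ posF f x := by simpa using posF_nonneg f x hx
      simp only [ContinuousLinearMap.neg_apply] at h1
      simp only [hu, ContinuousLinearMap.zero_apply, ContinuousLinearMap.smul_apply,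
        ContinuousLinearMap.add_apply, absF, smul_eq_mul]
      linarith
    · intro x hx
      have h1 := posF_ge f x hx
      have h2 : (0:ℝ) ≤ posF (-f) x := by simpa using posF_nonneg (-f) x hx
      simp only [hu, ContinuousLinearMap.smul_apply, ContinuousLinearMap.add_apply,
        absF, smul_eq_mul]
      linarith
  have hv_mem : v ∈ posSet (absF f) := by
    constructor
    · intro x hx
      have h1 := posF_ge f x hx
      have h2 : (0:ℝ) ≤ posF (-f) x := by simpa using posF_nonneg (-f) x hx
      simp only [hv, ContinuousLinearMap.zero_apply, ContinuousLinearMap.smul_apply,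
        ContinuousLinearMap.sub_apply, ContinuousLinearMap.add_apply, absF, smul_eq_mul]
      linarith
    · intro x hx
      have h1 := posF_ge (-f) x hx
      have h2 : (0:ℝ) ≤ posF f x := by simpa using posF_nonneg f x hx
      simp only [ContinuousLinearMap.neg_apply] at h1
      simp only [hv, ContinuousLinearMap.smul_apply, ContinuousLinearMap.sub_apply,
        ContinuousLinearMap.add_apply, absF, smul_eq_mul]
      linarith
  have key1 : φ f ≤ psi φ (absF f) := by
    have : φ f = φ u - φ v := by rw [← map_sub, huv]
    rw [this]
    have h1 : φ u ≤ pre2 φ (absF f) := pre2_mem_le φ hu_mem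
    have h2 : -φ v = (-φ) v := by simp
    have h3 : (-φ) v ≤ pre2 (-φ) (absF f) := pre2_mem_le (-φ) hv_mem
    unfold psi
    linarith [h2 ▸ h3]
  have key2 : -φ f ≤ psi φ (absF f) := by
    have : -φ f = (-φ) u - (-φ) v := by rw [← map_sub, huv]; simp
    rw [this]
    have h1 : (-φ) u ≤ pre2 (-φ) (absF f) := pre2_mem_le (-φ) hu_mem
    have h3 : -((-φ) v) = φ v := by simp
    have h4 : φ v ≤ pre2 φ (absF f) := pre2_mem_le φ hv_mem
    unfold psi
    linarith
  exact abs_le.2 ⟨by linarith, key1⟩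

end level2

section csupHelp

lemma ciSup_add_ciSup {a b : ℕ → ℝ} (ha : Monotone a) (hb : Monotone b)
    (hba : BddAbove (Set.range a)) (hbb : BddAbove (Set.range b)) :
    (⨆ m, a m) + (⨆ m, b m) = ⨆ m, (a m + b m) := by
  have hbab : BddAbove (Set.range fun m => a m + b m) := by
    obtain ⟨A, hA⟩ := hba; obtain ⟨B, hB⟩ := hbb
    refine ⟨A + B, ?_⟩
    rintro r ⟨m, rfl⟩
    exact add_le_add (hA ⟨m, rfl⟩) (hB ⟨m, rfl⟩)
  refine le_antisymm ?_ ?_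
  · have key : ∀ m m', a m + b m' ≤ ⨆ k, (a k + b k) := by
      intro m m'
      calc a m + b m' ≤ a (max m m') + b (max m m') :=
        add_le_add (ha (le_max_left m m')) (hb (le_max_right m m'))
      _ ≤ ⨆ k, (a k + b k) := le_ciSup hbab (max m m')
    have h1 : (⨆ m, a m) ≤ (⨆ k, (a k + b k)) - ⨆ m, b m := by
      refine ciSup_le fun m => ?_
      rw [le_sub_iff_add_le]
      have h2 : (⨆ m', b m') ≤ (⨆ k, (a k + b k)) - a m := by
        refine ciSup_le fun m' => ?_
        rw [le_sub_iff_add_le, add_comm]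
        exact key m m'
      linarith
    linarith
  · refine ciSup_le fun m => ?_
    exact add_le_add (le_ciSup hba m) (le_ciSup hbb m)

end csupHelp

section theta

variable (φ : (E →L[ℝ] ℝ) →L[ℝ] ℝ) (h : E →L[ℝ] ℝ)

/-- The truncated value of `|φ|` along `h` at a positive `g`. -/
noncomputable def Lt (g : E →L[ℝ] ℝ) : ℝ := ⨆ m : ℕ, psi φ (infF g ((m:ℝ) • h))

variable {h}

lemma Lt_term_mono (hh : leF 0 h) {g : E →L[ℝ] ℝ} (hg : leF 0 g) :
    Monotone fun m : ℕ => psi φ (infF g ((m:ℝ) • h)) := by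
  intro m m' hm
  exact psi_mono φ (infF_nonneg hg (leF_nsmul_nonneg hh m))
    (infF_mono (leF_refl g) (leF_nsmul hh hm))

lemma Lt_term_le (hh : leF 0 h) {g : E →L[ℝ] ℝ} (hg : leF 0 g) (m : ℕ) :
    psi φ (infF g ((m:ℝ) • h)) ≤ psi φ g :=
  psi_mono φ (infF_nonneg hg (leF_nsmul_nonneg hh m)) (infF_le_left _ _)

lemma Lt_bddAbove (hh : leF 0 h) {g : E →L[ℝ] ℝ} (hg : leF 0 g) :
    BddAbove (Set.range fun m : ℕ => psi φ (infF g ((m:ℝ) • h))) := by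
  refine ⟨psi φ g, ?_⟩
  rintro r ⟨m, rfl⟩
  exact Lt_term_le φ hh hg m

lemma Lt_le (hh : leF 0 h) {g : E →L[ℝ] ℝ} (hg : leF 0 g) : Lt φ h g ≤ psi φ g :=
  ciSup_le (Lt_term_le φ hh hg)

lemma Lt_nonneg (hh : leF 0 h) {g : E →L[ℝ] ℝ} (hg : leF 0 g) : 0 ≤ Lt φ h g := by
  have h0 : 0 ≤ psi φ (infF g (((0:ℕ):ℝ) • h)) :=
    psi_nonneg φ (infF_nonneg hg (leF_nsmul_nonneg hh 0))
  exact h0.trans (le_ciSup (Lt_bddAbove φ hh hg) 0)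

lemma Lt_add (hh : leF 0 h) {g1 g2 : E →L[ℝ] ℝ} (hg1 : leF 0 g1) (hg2 : leF 0 g2) :
    Lt φ h (g1 + g2) = Lt φ h g1 + Lt φ h g2 := by
  have hg12 : leF 0 (g1 + g2) := leF_zero_add hg1 hg2
  refine le_antisymm ?_ ?_
  · refine ciSup_le fun m => ?_
    have hsplit : leF (infF (g1 + g2) ((m:ℝ) • h))
        (infF g1 ((m:ℝ) • h) + infF g2 ((m:ℝ) • h)) :=
      infF_add_le hg1 hg2 (leF_nsmul_nonneg hh m)
    calc psi φ (infF (g1 + g2) ((m:ℝ) • h))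
        ≤ psi φ (infF g1 ((m:ℝ) • h) + infF g2 ((m:ℝ) • h)) :=
          psi_mono φ (infF_nonneg hg12 (leF_nsmul_nonneg hh m)) hsplit
    _ = psi φ (infF g1 ((m:ℝ) • h)) + psi φ (infF g2 ((m:ℝ) • h)) :=
          psi_add φ (infF_nonneg hg1 (leF_nsmul_nonneg hh m))
            (infF_nonneg hg2 (leF_nsmul_nonneg hh m))
    _ ≤ Lt φ h g1 + Lt φ h g2 :=
          add_le_add (le_ciSup (Lt_bddAbove φ hh hg1) m) (le_ciSup (Lt_bddAbove φ hh hg2) m)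
  · have key : ∀ m1 m2 : ℕ, psi φ (infF g1 ((m1:ℝ) • h)) + psi φ (infF g2 ((m2:ℝ) • h))
        ≤ Lt φ h (g1 + g2) := by
      intro m1 m2
      have hsum : leF (infF g1 ((m1:ℝ) • h) + infF g2 ((m2:ℝ) • h))
          (infF (g1 + g2) (((m1 + m2 : ℕ):ℝ) • h)) := by
        refine le_infF (leF_add (infF_le_left _ _) (infF_le_left _ _)) ?_
        have hcast : ((m1 + m2 : ℕ):ℝ) • h = (m1:ℝ) • h + (m2:ℝ) • h := by
          push_cast
          rw [add_smul]
        rw [hcast]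
        exact leF_add (infF_le_right _ _) (infF_le_right _ _)
      calc psi φ (infF g1 ((m1:ℝ) • h)) + psi φ (infF g2 ((m2:ℝ) • h))
          = psi φ (infF g1 ((m1:ℝ) • h) + infF g2 ((m2:ℝ) • h)) :=
            (psi_add φ (infF_nonneg hg1 (leF_nsmul_nonneg hh m1))
              (infF_nonneg hg2 (leF_nsmul_nonneg hh m2))).symm
      _ ≤ psi φ (infF (g1 + g2) (((m1 + m2 : ℕ):ℝ) • h)) :=
            psi_mono φ (leF_zero_add (infF_nonneg hg1 (leF_nsmul_nonneg hh m1))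
              (infF_nonneg hg2 (leF_nsmul_nonneg hh m2))) hsum
      _ ≤ Lt φ h (g1 + g2) := le_ciSup (Lt_bddAbove φ hh hg12) (m1 + m2)
    have h1 : Lt φ h g1 ≤ Lt φ h (g1 + g2) - Lt φ h g2 := by
      refine ciSup_le fun m1 => ?_
      rw [le_sub_iff_add_le]
      have h2 : Lt φ h g2 ≤ Lt φ h (g1 + g2) - psi φ (infF g1 ((m1:ℝ) • h)) := by
        refine ciSup_le fun m2 => ?_
        rw [le_sub_iff_add_le, add_comm]
        exact key m1 m2
      linarith
    linarith

/-- The underlying function of the component of `|φ|` along `h`. -/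
noncomputable def preTh (h : E →L[ℝ] ℝ) (f : E →L[ℝ] ℝ) : ℝ :=
  Lt φ h (posF f) - Lt φ h (posF (-f))

lemma preTh_add (hh : leF 0 h) (f1 f2 : E →L[ℝ] ℝ) :
    preTh φ h (f1 + f2) = preTh φ h f1 + preTh φ h f2 := by
  have wd : ∀ a b c d : E →L[ℝ] ℝ, leF 0 a → leF 0 b → leF 0 c → leF 0 d →
      a - b = c - d → Lt φ h a - Lt φ h b = Lt φ h c - Lt φ h d := by
    intro a b c d ha hb hc hd hab
    have hsum : a + d = c + b := sub_eq_sub_iff_add_eq_add.mp hab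
    have h1 := Lt_add φ hh ha hd
    have h2 := Lt_add φ hh hc hb
    rw [hsum] at h1
    linarith
  have hdec : posF (f1 + f2) - posF (-(f1 + f2)) =
      (posF f1 + posF f2) - (posF (-f1) + posF (-f2)) := by
    rw [posF_decomp]
    rw [show posF f1 + posF f2 - (posF (-f1) + posF (-f2)) =
      (posF f1 - posF (-f1)) + (posF f2 - posF (-f2)) by abel]
    rw [posF_decomp, posF_decomp]
  have h := wd _ _ _ _ (posF_nonneg _) (posF_nonneg _)
    (leF_zero_add (posF_nonneg _) (posF_nonneg _))
    (leF_zero_add (posF_nonneg _) (posF_nonneg _)) hdec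
  unfold preTh
  rw [h, Lt_add φ hh (posF_nonneg f1) (posF_nonneg f2),
    Lt_add φ hh (posF_nonneg (-f1)) (posF_nonneg (-f2))]
  ring

lemma preTh_bound (hh : leF 0 h) (f : E →L[ℝ] ℝ) :
    |preTh φ h f| ≤ 4 * ‖φ‖ * ‖f‖ := by
  have h1 : Lt φ h (posF f) ≤ psi φ (posF f) := Lt_le φ hh (posF_nonneg f)
  have h2 : Lt φ h (posF (-f)) ≤ psi φ (posF (-f)) := Lt_le φ hh (posF_nonneg (-f))
  have h3 := psi_le_opBound φ (posF_nonneg f)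
  have h4 := psi_le_opBound φ (posF_nonneg (-f))
  have h5 : ‖posF f‖ ≤ ‖f‖ := posF_norm_le f
  have h6 : ‖posF (-f)‖ ≤ ‖f‖ := (posF_norm_le (-f)).trans_eq (norm_neg f)
  have h7 : 0 ≤ Lt φ h (posF f) := Lt_nonneg φ hh (posF_nonneg f)
  have h8 : 0 ≤ Lt φ h (posF (-f)) := Lt_nonneg φ hh (posF_nonneg (-f))
  have h9 : (0:ℝ) ≤ ‖φ‖ := norm_nonneg φ
  have h10 : (0:ℝ) ≤ ‖f‖ := norm_nonneg f
  have h11 : 2 * ‖φ‖ * ‖posF f‖ ≤ 2 * ‖φ‖ * ‖f‖ := by nlinarith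
  have h12 : 2 * ‖φ‖ * ‖posF (-f)‖ ≤ 2 * ‖φ‖ * ‖f‖ := by nlinarith
  rw [preTh, abs_sub_le_iff]
  constructor <;> nlinarith

/-- The component of `|φ|` along a positive `h`, as an element of the bidual. -/
noncomputable def theta (hh : leF 0 h) : (E →L[ℝ] ℝ) →L[ℝ] ℝ :=
  AddMonoidHom.toRealLinearMap (AddMonoidHom.mk' (preTh φ h) (preTh_add φ hh))
    (by
      have hC : (0:ℝ) ≤ 4 * ‖φ‖ := by positivity
      refine (LipschitzWith.of_dist_le_mul (K := (4 * ‖φ‖).toNNReal) ?_).continuous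
      intro a b
      rw [Real.coe_toNNReal _ hC, dist_eq_norm, dist_eq_norm]
      simp only [AddMonoidHom.mk'_apply]
      have hsub : preTh φ h a - preTh φ h b = preTh φ h (a - b) := by
        have := preTh_add φ hh (a - b) b
        simp only [sub_add_cancel] at this
        linarith
      rw [Real.norm_eq_abs, hsub]
      exact preTh_bound φ hh (a - b))

lemma theta_apply_pos (hh : leF 0 h) {g : E →L[ℝ] ℝ} (hg : leF 0 g) :
    theta φ hh g = Lt φ h g := by
  have h1 : posF g = g := posF_eq_self hg
  have h2 : posF (-g) = 0 := posF_neg_of_nonneg hg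
  have h3 : Lt φ h (0 : E →L[ℝ] ℝ) = 0 := by
    have : ∀ m : ℕ, psi φ (infF (0 : E →L[ℝ] ℝ) ((m:ℝ) • h)) = 0 := by
      intro m
      have hz : infF (0 : E →L[ℝ] ℝ) ((m:ℝ) • h) = 0 :=
        leF_antisymm (infF_le_left _ _) (infF_nonneg (leF_refl 0) (leF_nsmul_nonneg hh m))
      rw [hz, psi_zero]
    unfold Lt
    simp only [this]
    exact ciSup_const
  show preTh φ h g = Lt φ h g
  unfold preTh
  rw [h1, h2, h3, sub_zero]

lemma theta_nonneg (hh : leF 0 h) {g : E →L[ℝ] ℝ} (hg : leF 0 g) :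
    0 ≤ theta φ hh g := by
  rw [theta_apply_pos φ hh hg]
  exact Lt_nonneg φ hh hg

lemma theta_le_psi (hh : leF 0 h) {g : E →L[ℝ] ℝ} (hg : leF 0 g) :
    theta φ hh g ≤ psi φ g := by
  rw [theta_apply_pos φ hh hg]
  exact Lt_le φ hh hg

lemma theta_self (hh : leF 0 h) : theta φ hh h = psi φ h := by
  rw [theta_apply_pos φ hh hh]
  have hterm : ∀ m : ℕ, 1 ≤ m → infF h ((m:ℝ) • h) = h := by
    intro m hm
    refine leF_antisymm (infF_le_left _ _) (le_infF (leF_refl h) ?_)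
    intro x hx
    have h1 := hh x hx
    simp only [ContinuousLinearMap.zero_apply] at h1
    simp only [ContinuousLinearMap.smul_apply, smul_eq_mul]
    have : (1:ℝ) ≤ (m:ℝ) := by exact_mod_cast hm
    nlinarith
  refine le_antisymm ?_ ?_
  · refine ciSup_le fun m => ?_
    rcases Nat.eq_zero_or_pos m with hm | hm
    · subst hm
      have hz : infF h (((0:ℕ):ℝ) • h) = 0 := by
        refine leF_antisymm ?_ (infF_nonneg hh (leF_nsmul_nonneg hh 0))
        intro x hx
        have := infF_le_right h (((0:ℕ):ℝ) • h) x hx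
        simpa using this
      rw [hz, psi_zero]
      exact psi_nonneg φ hh
    · rw [hterm m hm]
  · have := le_ciSup (Lt_bddAbove φ hh hh) 1
    rwa [hterm 1 le_rfl] at this

lemma theta_disj_zero (hh : leF 0 h) {g : E →L[ℝ] ℝ} (hg : leF 0 g)
    (hd : disjF g h) : theta φ hh g = 0 := by
  rw [theta_apply_pos φ hh hg]
  have hterm : ∀ m : ℕ, psi φ (infF g ((m:ℝ) • h)) = 0 := by
    intro m
    have hd2 : disjF ((1:ℝ) • g) ((m:ℝ) • h) := by
      have := disjF_nsmul hg hh hd 1 m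
      simpa using this
    have hz : infF g ((m:ℝ) • h) = 0 := by
      refine eqF fun x hx => ?_
      have h1 : infF ((1:ℝ) • g) ((m:ℝ) • h) x = 0 := hd2 x hx
      rw [one_smul] at h1
      simpa using h1
    rw [hz, psi_zero]
  unfold Lt
  simp only [hterm]
  exact ciSup_const

end theta

section sumTheta

variable (φ : (E →L[ℝ] ℝ) →L[ℝ] ℝ)

lemma sum_ciSup_eq (a : ℕ → ℕ → ℝ) (K : ℕ) (hmono : ∀ k, Monotone (a k))
    (hbdd : ∀ k, BddAbove (Set.range (a k))) :
    ∑ k ∈ Finset.range K, (⨆ m, a k m) = ⨆ m, ∑ k ∈ Finset.range K, a k m := by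
  induction K with
  | zero => simp
  | succ K ih =>
      rw [Finset.sum_range_succ, ih]
      have hmonos : Monotone fun m => ∑ k ∈ Finset.range K, a k m :=
        fun m m' hm => Finset.sum_le_sum fun k _ => hmono k hm
      have hbdds : BddAbove (Set.range fun m => ∑ k ∈ Finset.range K, a k m) := by
        refine ⟨∑ k ∈ Finset.range K, (⨆ m, a k m), ?_⟩
        rintro r ⟨m, rfl⟩
        exact Finset.sum_le_sum fun k _ => le_ciSup (hbdd k) m
      rw [ciSup_add_ciSup hmonos (hmono K) hbdds (hbdd K)]
      congr 1
      funext m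
      rw [Finset.sum_range_succ]

lemma psi_sum (c : ℕ → E →L[ℝ] ℝ) (hpos : ∀ k, leF 0 (c k)) (K : ℕ) :
    psi φ (∑ k ∈ Finset.range K, c k) = ∑ k ∈ Finset.range K, psi φ (c k) := by
  induction K with
  | zero => simp [psi_zero]
  | succ K ih =>
      rw [Finset.sum_range_succ, Finset.sum_range_succ, ← ih]
      exact psi_add φ (leF_zero_sum c hpos _) (hpos K)

variable {hs : ℕ → E →L[ℝ] ℝ} (hpos : ∀ k, leF 0 (hs k))
  (hdisj : ∀ k l, k ≠ l → disjF (hs k) (hs l))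

include hpos hdisj

lemma sum_theta_le {g : E →L[ℝ] ℝ} (hg : leF 0 g) (K : ℕ) :
    ∑ k ∈ Finset.range K, theta φ (hpos k) g ≤ psi φ g := by
  have hrw : ∀ k, theta φ (hpos k) g = ⨆ m : ℕ, psi φ (infF g ((m:ℝ) • hs k)) := by
    intro k
    rw [theta_apply_pos φ (hpos k) hg]
    rfl
  rw [Finset.sum_congr rfl fun k _ => hrw k]
  rw [sum_ciSup_eq _ K (fun k => Lt_term_mono φ (hpos k) hg)
    (fun k => Lt_bddAbove φ (hpos k) hg)]
  refine ciSup_le fun m => ?_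
  set c : ℕ → E →L[ℝ] ℝ := fun k => infF g ((m:ℝ) • hs k) with hc
  have hcpos : ∀ k, leF 0 (c k) := fun k => infF_nonneg hg (leF_nsmul_nonneg (hpos k) m)
  have hcle : ∀ k, leF (c k) g := fun k => infF_le_left _ _
  have hcdisj : ∀ k l, k ≠ l → disjF (c k) (c l) := by
    intro k l hkl
    refine disjF_of_leF (hcpos k) (hcpos l) (infF_le_right _ _) (infF_le_right _ _) ?_
    exact disjF_nsmul (hpos k) (hpos l) (hdisj k l hkl) m m
  calc ∑ k ∈ Finset.range K, psi φ (c k)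
      = psi φ (∑ k ∈ Finset.range K, c k) := (psi_sum φ c hcpos K).symm
  _ ≤ psi φ g := psi_mono φ (leF_zero_sum c hcpos _)
      (sum_disjoint_le hg c hcpos hcle hcdisj K)

lemma summable_theta_pos (N : ℕ) {g : E →L[ℝ] ℝ} (hg : leF 0 g) :
    Summable fun k => theta φ (hpos (N + k)) g := by
  refine summable_of_sum_range_le (c := psi φ g) (fun k => theta_nonneg φ (hpos (N + k)) hg)
    fun K => ?_
  have hpos' : ∀ k, leF 0 (hs (N + k)) := fun k => hpos (N + k)
  have hdisj' : ∀ k l, k ≠ l → disjF (hs (N + k)) (hs (N + l)) := by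
    intro k l hkl
    exact hdisj (N + k) (N + l) (by omega)
  exact sum_theta_le φ hpos' hdisj' hg K

lemma summable_theta (N : ℕ) (f : E →L[ℝ] ℝ) :
    Summable fun k => theta φ (hpos (N + k)) f := by
  have hdec : ∀ k, theta φ (hpos (N + k)) f =
      theta φ (hpos (N + k)) (posF f) - theta φ (hpos (N + k)) (posF (-f)) := by
    intro k
    rw [← map_sub, posF_decomp]
  simp_rw [hdec]
  exact (summable_theta_pos φ hpos hdisj N (posF_nonneg f)).sub
    (summable_theta_pos φ hpos hdisj N (posF_nonneg (-f)))

lemma tsum_theta_le (N : ℕ) {g : E →L[ℝ] ℝ} (hg : leF 0 g) :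
    ∑' k, theta φ (hpos (N + k)) g ≤ psi φ g := by
  refine Summable.tsum_le_of_sum_range_le (summable_theta_pos φ hpos hdisj N hg) fun K => ?_
  have hpos' : ∀ k, leF 0 (hs (N + k)) := fun k => hpos (N + k)
  have hdisj' : ∀ k l, k ≠ l → disjF (hs (N + k)) (hs (N + l)) := by
    intro k l hkl
    exact hdisj (N + k) (N + l) (by omega)
  exact sum_theta_le φ hpos' hdisj' hg K

/-- The underlying function of the tail sums. -/
noncomputable def preTheta (N : ℕ) (f : E →L[ℝ] ℝ) : ℝ :=
  ∑' k, theta φ (hpos (N + k)) f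

lemma preTheta_def (N : ℕ) (f : E →L[ℝ] ℝ) :
    preTheta φ hpos N f = ∑' k, theta φ (hpos (N + k)) f := rfl

lemma preTheta_add (N : ℕ) (f1 f2 : E →L[ℝ] ℝ) :
    preTheta φ hpos N (f1 + f2) =
      preTheta φ hpos N f1 + preTheta φ hpos N f2 := by
  unfold preTheta
  rw [← Summable.tsum_add (summable_theta φ hpos hdisj N f1) (summable_theta φ hpos hdisj N f2)]
  exact tsum_congr fun k => map_add _ f1 f2

lemma preTheta_bound (N : ℕ) (f : E →L[ℝ] ℝ) :
    |preTheta φ hpos N f| ≤ 2 * ‖φ‖ * ‖f‖ := by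
  set A := ∑' k, theta φ (hpos (N + k)) (posF f) with hA
  set B := ∑' k, theta φ (hpos (N + k)) (posF (-f)) with hB
  have hval : preTheta φ hpos N f = A - B := by
    unfold preTheta
    rw [hA, hB, ← Summable.tsum_sub (summable_theta_pos φ hpos hdisj N (posF_nonneg f))
      (summable_theta_pos φ hpos hdisj N (posF_nonneg (-f)))]
    exact tsum_congr fun k => by rw [← map_sub, posF_decomp]
  have hA0 : 0 ≤ A := tsum_nonneg fun k => theta_nonneg φ _ (posF_nonneg f)
  have hB0 : 0 ≤ B := tsum_nonneg fun k => theta_nonneg φ _ (posF_nonneg (-f))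
  have hA1 : A ≤ 2 * ‖φ‖ * ‖f‖ := by
    refine (tsum_theta_le φ hpos hdisj N (posF_nonneg f)).trans ?_
    refine (psi_le_opBound φ (posF_nonneg f)).trans ?_
    have := posF_norm_le f
    nlinarith [norm_nonneg φ]
  have hB1 : B ≤ 2 * ‖φ‖ * ‖f‖ := by
    refine (tsum_theta_le φ hpos hdisj N (posF_nonneg (-f))).trans ?_
    refine (psi_le_opBound φ (posF_nonneg (-f))).trans ?_
    have h1 := posF_norm_le (-f)
    rw [norm_neg] at h1
    nlinarith [norm_nonneg φ]
  rw [hval, abs_sub_le_iff]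
  constructor <;> linarith

/-- The tail sums, as elements of the bidual. -/
noncomputable def Theta (N : ℕ) : (E →L[ℝ] ℝ) →L[ℝ] ℝ :=
  AddMonoidHom.toRealLinearMap
    (AddMonoidHom.mk' (preTheta φ hpos N) (preTheta_add φ hpos hdisj N))
    (by
      have hC : (0:ℝ) ≤ 2 * ‖φ‖ := by positivity
      refine (LipschitzWith.of_dist_le_mul (K := (2 * ‖φ‖).toNNReal) ?_).continuous
      intro a b
      rw [Real.coe_toNNReal _ hC, dist_eq_norm, dist_eq_norm]
      simp only [AddMonoidHom.mk'_apply]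
      have hsub : preTheta φ hpos N a - preTheta φ hpos N b =
          preTheta φ hpos N (a - b) := by
        have := preTheta_add φ hpos hdisj N (a - b) b
        simp only [sub_add_cancel] at this
        linarith
      rw [Real.norm_eq_abs, hsub]
      exact preTheta_bound φ hpos hdisj N (a - b))

lemma Theta_apply (N : ℕ) (f : E →L[ℝ] ℝ) :
    Theta φ hpos hdisj N f = ∑' k, theta φ (hpos (N + k)) f := rfl

lemma Theta_nonneg (N : ℕ) {f : E →L[ℝ] ℝ} (hf : leF 0 f) :
    0 ≤ Theta φ hpos hdisj N f := by
  rw [Theta_apply]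
  exact tsum_nonneg fun k => theta_nonneg φ _ hf

lemma Theta_chain {N N' : ℕ} (h : N ≤ N') {f : E →L[ℝ] ℝ} (hf : leF 0 f) :
    Theta φ hpos hdisj N' f ≤ Theta φ hpos hdisj N f := by
  rw [Theta_apply, Theta_apply]
  set u : ℕ → ℝ := fun j => theta φ (hpos (N + j)) f with hu
  have hsummable : Summable u := summable_theta φ hpos hdisj N f
  have hsplit := hsummable.sum_add_tsum_nat_add (f := u) (N' - N)
  have htail : ∑' (i : ℕ), u (i + (N' - N)) = ∑' k, theta φ (hpos (N' + k)) f := by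
    refine tsum_congr fun i => ?_
    have : N + (i + (N' - N)) = N' + i := by omega
    simp only [hu, this]
  have hfin : 0 ≤ ∑ i ∈ Finset.range (N' - N), u i :=
    Finset.sum_nonneg fun i _ => theta_nonneg φ _ hf
  rw [htail] at hsplit
  linarith

lemma Theta_tendsto {f : E →L[ℝ] ℝ} (hf : leF 0 f) :
    Tendsto (fun N => Theta φ hpos hdisj N f) atTop (𝓝 0) := by
  set u : ℕ → ℝ := fun j => theta φ (hpos j) f with hu
  have hsummable : Summable u := by
    have := summable_theta φ hpos hdisj 0 f
    simpa using this
  have hmain := tendsto_sum_nat_add u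
  have hcongr : ∀ N, Theta φ hpos hdisj N f = ∑' k, u (k + N) := by
    intro N
    rw [Theta_apply]
    exact tsum_congr fun k => by rw [hu]; simp [add_comm]
  simp only [hcongr]
  exact hmain

lemma Theta_ge_head (N : ℕ) : psi φ (hs N) ≤ Theta φ hpos hdisj N (hs N) := by
  rw [Theta_apply]
  have h0 : theta φ (hpos (N + 0)) (hs N) = psi φ (hs N) := by
    simp only [Nat.add_zero]
    exact theta_self φ (hpos N)
  calc psi φ (hs N) = theta φ (hpos (N + 0)) (hs N) := h0.symm
  _ ≤ ∑' k, theta φ (hpos (N + k)) (hs N) :=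
      Summable.le_tsum (summable_theta_pos φ hpos hdisj N (hpos N)) 0
        fun k _ => theta_nonneg φ _ (hpos N)

end sumTheta

section bridge

lemma absF_le_absEval (f : E →L[ℝ] ℝ) {y : E} (hy : 0 ≤ y) :
    absF f y ≤ absEval f y := by
  have hbdd : BddAbove (Set.range fun z : {z : E // |z| ≤ y} => f z.1) := by
    refine ⟨‖f‖ * ‖y‖, ?_⟩
    rintro r ⟨⟨z, hz⟩, rfl⟩
    calc f z ≤ |f z| := le_abs_self _
    _ ≤ ‖f‖ * ‖z‖ := f.le_opNorm z
    _ ≤ ‖f‖ * ‖y‖ := by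
        refine mul_le_mul_of_nonneg_left ?_ (norm_nonneg f)
        exact norm_le_norm_of_abs_le_abs (hz.trans_eq (abs_of_nonneg hy).symm)
  have key : ∀ a ∈ Set.Icc (0:E) y, ∀ b ∈ Set.Icc (0:E) y,
      f a - f b ≤ absEval f y := by
    intro a ha b hb
    have habs : |a - b| ≤ y := by
      rw [abs_le']
      refine ⟨?_, ?_⟩
      · have h1 : a - b ≤ a := by
          calc a - b ≤ a - 0 := sub_le_sub_left hb.1 a
          _ = a := sub_zero a
        exact h1.trans ha.2
      · have h1 : -(a - b) ≤ b := by
          calc -(a - b) = b - a := by abel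
          _ ≤ b - 0 := sub_le_sub_left ha.1 b
          _ = b := sub_zero b
        exact h1.trans hb.2
    have hfab : f a - f b = f (a - b) := (map_sub f a b).symm
    rw [hfab]
    exact le_ciSup hbdd ⟨a - b, habs⟩
  have hval : absF f y = pre f y + pre (-f) y := by
    simp only [absF, ContinuousLinearMap.add_apply]
    rw [posF_apply_nonneg f hy, posF_apply_nonneg (-f) hy]
  rw [hval]
  have h1 : pre f y ≤ absEval f y - pre (-f) y := by
    refine csSup_le ⟨f 0, 0, ⟨le_rfl, hy⟩, rfl⟩ ?_
    rintro r ⟨a, ha, rfl⟩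
    rw [le_sub_iff_add_le]
    have h2 : pre (-f) y ≤ absEval f y - f a := by
      refine csSup_le ⟨(-f) 0, 0, ⟨le_rfl, hy⟩, rfl⟩ ?_
      rintro s ⟨b, hb, rfl⟩
      rw [ContinuousLinearMap.neg_apply, le_sub_iff_add_le, add_comm]
      have := key a ha b hb
      linarith
    linarith
  linarith

lemma disjF_absF_of_disjointPair {u v : E →L[ℝ] ℝ} (hdp : DisjointPair u v) :
    disjF (absF u) (absF v) := by
  intro x hx
  refine le_antisymm ?_ ?_
  · have h0 := hdp x hx
    rw [← h0]
    haveI : Nonempty {y : E // 0 ≤ y ∧ y ≤ x} := ⟨⟨0, le_rfl, hx⟩⟩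
    refine le_ciInf fun p => ?_
    obtain ⟨y, hy0, hyx⟩ := p
    have hsplit : infF (absF u) (absF v) x =
        infF (absF u) (absF v) y + infF (absF u) (absF v) (x - y) := by
      rw [← map_add]
      congr 1
      abel
    have h1 : infF (absF u) (absF v) y ≤ absEval u y :=
      (infF_le_left _ _ y hy0).trans (absF_le_absEval u hy0)
    have h2 : infF (absF u) (absF v) (x - y) ≤ absEval v (x - y) :=
      (infF_le_right _ _ _ (sub_nonneg.2 hyx)).trans (absF_le_absEval v (sub_nonneg.2 hyx))
    rw [hsplit]
    exact add_le_add h1 h2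
  · have := infF_nonneg (absF_nonneg u) (absF_nonneg v) x hx
    simpa using this

end bridge

end ALKit

/-- If the bidual of `E` has order continuous norm, then every almost weakly limited
operator into `E` is almost limited. -/
theorem bidual_orderContinuous_almostWeaklyLimited_almostLimited [NormedAddCommGroup X] [NormedSpace ℝ X] [CompleteSpace X] [NormedAddCommGroup E] [Lattice E] [HasSolidNorm E] [IsOrderedAddMonoid E] [NormedSpace ℝ E] [PosSMulStrictMono ℝ E] [CompleteSpace E]
    (hE : BidualOrderContinuousNorm E) (T : X →L[ℝ] E)
    (hT : AlmostDPSet (T '' Metric.closedBall 0 1)) :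
    AlmostLimitedSet (T '' Metric.closedBall 0 1) := by
  intro f hd hw
  -- Banach-Steinhaus: the weak* null sequence is norm bounded
  obtain ⟨M, hM⟩ : ∃ M, ∀ n, ‖f n‖ ≤ M := by
    apply banach_steinhaus
    intro x
    have habs : Tendsto (fun n => |f n x|) atTop (𝓝 (0:ℝ)) := by
      simpa using (hw x).abs
    obtain ⟨C, hC⟩ := habs.bddAbove_range
    exact ⟨C, fun n => by
      have := hC (Set.mem_range_self n)
      simpa [Real.norm_eq_abs] using this⟩
  have hM0 : (0:ℝ) ≤ M := (norm_nonneg (f 0)).trans (hM 0)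
  have hweak : WeaklyNullSeq f := by
    intro φ
    set h : ℕ → E →L[ℝ] ℝ := fun n => ALKit.absF (f n) with hh
    have hhpos : ∀ n, ALKit.leF 0 (h n) := fun n => ALKit.absF_nonneg (f n)
    have hhdisj : ∀ n m, n ≠ m → ALKit.disjF (h n) (h m) := fun n m hnm =>
      ALKit.disjF_absF_of_disjointPair (hd n m hnm)
    have hbound : ∀ n, |φ (f n)| ≤ ALKit.psi φ (h n) := fun n =>
      ALKit.abs_apply_le_psi_absF φ (f n)
    have hPF : ∀ g : E →L[ℝ] ℝ, PositiveFunctional g → ALKit.leF 0 g := by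
      intro g hg x hx
      simpa using hg x hx
    have key : Tendsto (fun n => ALKit.psi φ (h n)) atTop (𝓝 0) := by
      by_contra hcon
      have hnn : ∀ n, 0 ≤ ALKit.psi φ (h n) := fun n => ALKit.psi_nonneg φ (hhpos n)
      rw [Metric.tendsto_atTop] at hcon
      push_neg at hcon
      obtain ⟨ε, hε, hfreq⟩ := hcon
      have hfreq' : ∃ᶠ n in atTop, ε ≤ ALKit.psi φ (h n) := by
        rw [Filter.frequently_atTop]
        intro N
        obtain ⟨n, hn1, hn2⟩ := hfreq N
        refine ⟨n, hn1, ?_⟩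
        rw [Real.dist_eq, sub_zero, abs_of_nonneg (hnn n)] at hn2
        exact hn2
      obtain ⟨ρ, hρmono, hρ⟩ := Filter.extraction_of_frequently_atTop hfreq'
      set hsq : ℕ → E →L[ℝ] ℝ := fun k => h (ρ k) with hhsq
      have hspos : ∀ k, ALKit.leF 0 (hsq k) := fun k => hhpos (ρ k)
      have hsdisj : ∀ k l, k ≠ l → ALKit.disjF (hsq k) (hsq l) := fun k l hkl =>
        hhdisj (ρ k) (ρ l) fun e => hkl (hρmono.injective e)
      set S : Set ((E →L[ℝ] ℝ) →L[ℝ] ℝ) := Set.range (ALKit.Theta φ hspos hsdisj) with hS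
      have hSne : S.Nonempty := ⟨_, 0, rfl⟩
      have hdir : DirectedOn (fun Φ Ψ => BidualLe Ψ Φ) S := by
        rintro _ ⟨N1, rfl⟩ _ ⟨N2, rfl⟩
        refine ⟨ALKit.Theta φ hspos hsdisj (max N1 N2), ⟨_, rfl⟩, ?_, ?_⟩
        · intro g hg
          exact ALKit.Theta_chain φ hspos hsdisj (le_max_left _ _) (hPF g hg)
        · intro g hg
          exact ALKit.Theta_chain φ hspos hsdisj (le_max_right _ _) (hPF g hg)
      have hposS : ∀ Φ ∈ S, BidualLe 0 Φ := by
        rintro _ ⟨N, rfl⟩ g hg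
        simpa using ALKit.Theta_nonneg φ hspos hsdisj N (hPF g hg)
      have hlb : ∀ Ψ, (∀ Φ ∈ S, BidualLe Ψ Φ) → BidualLe Ψ 0 := by
        intro Ψ hΨ g hg
        have h1 : ∀ N, Ψ g ≤ ALKit.Theta φ hspos hsdisj N g := fun N =>
          hΨ _ ⟨N, rfl⟩ g hg
        have h2 := ALKit.Theta_tendsto φ hspos hsdisj (hPF g hg)
        have h3 : Ψ g ≤ 0 := ge_of_tendsto h2 (Filter.Eventually.of_forall h1)
        simpa using h3
      have hM2 : (0:ℝ) < 2 * M + 1 := by linarith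
      obtain ⟨Φ, hΦS, hΦnorm⟩ := hE S hSne hdir hposS hlb (ε / (2 * M + 1)) (by positivity)
      obtain ⟨N, rfl⟩ := hΦS
      have h1 : ε ≤ ALKit.Theta φ hspos hsdisj N (hsq N) :=
        (hρ N).trans (ALKit.Theta_ge_head φ hspos hsdisj N)
      have h2 : ALKit.Theta φ hspos hsdisj N (hsq N) ≤
          ‖ALKit.Theta φ hspos hsdisj N‖ * ‖hsq N‖ :=
        (le_abs_self _).trans ((ALKit.Theta φ hspos hsdisj N).le_opNorm _)
      have h3 : ‖hsq N‖ ≤ 2 * M := by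
        have := ALKit.absF_norm_le (f (ρ N))
        have := hM (ρ N)
        simp only [hhsq, hh]
        calc ‖ALKit.absF (f (ρ N))‖ ≤ 2 * ‖f (ρ N)‖ := ALKit.absF_norm_le (f (ρ N))
        _ ≤ 2 * M := by linarith [hM (ρ N)]
      have h4 : ‖ALKit.Theta φ hspos hsdisj N‖ * ‖hsq N‖ ≤ (ε / (2 * M + 1)) * (2 * M) :=
        mul_le_mul (le_of_lt hΦnorm) h3 (norm_nonneg _) (by positivity)
      have h5 : (ε / (2 * M + 1)) * (2 * M) < ε := by
        rw [div_mul_eq_mul_div, div_lt_iff₀ hM2]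
        nlinarith
      linarith
    refine squeeze_zero_norm (fun n => ?_) key
    simpa [Real.norm_eq_abs] using hbound n
  exact hT f hd hweak
end

section
/- The set of order almost Dunford-Pettis operators from a Banach lattice E into a Banach lattice F is a norm closed vector subspace of the space L(E,F) of all bounded operators. -/
open Filter Topology Pointwise

variable {E F G X : Type*}

variable [NormedAddCommGroup E] [Lattice E] [HasSolidNorm E] [IsOrderedAddMonoid E] [NormedSpace ℝ E]
  [NormedAddCommGroup F] [Lattice F] [HasSolidNorm F] [IsOrderedAddMonoid F] [NormedSpace ℝ F] in
/-- An order almost Dunford-Pettis operator: the image of each order interval `[-x, x]`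
is an almost Dunford-Pettis set. -/
def OrderAlmostDP (T : E →L[ℝ] F) : Prop :=
  ∀ x : E, 0 ≤ x → AlmostDPSet (T '' Set.Icc (-x) x)


section AuxLemmas

open NormedSpace in
theorem weaklyNull_bdd' {Y : Type*} [NormedAddCommGroup Y] [NormedSpace ℝ Y] (f : ℕ → Y)
    (h : ∀ φ : Y →L[ℝ] ℝ, Tendsto (fun n => φ (f n)) atTop (𝓝 0)) :
    ∃ M, 0 ≤ M ∧ ∀ n, ‖f n‖ ≤ M := by
  obtain ⟨C, hC⟩ := banach_steinhaus (g := fun n => inclusionInDoubleDual ℝ Y (f n))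
    (fun φ => by
      obtain ⟨C, hC⟩ := ((h φ).norm).bddAbove_range
      exact ⟨C, fun n => hC ⟨n, rfl⟩⟩)
  refine ⟨max C 0, le_max_right _ _, fun n => le_trans ?_ (le_max_left _ _)⟩
  rw [← (inclusionInDoubleDualLi ℝ (E := Y)).norm_map (f n)]
  exact hC n

variable {E' F' : Type*} [NormedAddCommGroup E'] [Lattice E'] [HasSolidNorm E'] [IsOrderedAddMonoid E'] [NormedSpace ℝ E']
  [NormedAddCommGroup F'] [Lattice F'] [HasSolidNorm F'] [IsOrderedAddMonoid F'] [NormedSpace ℝ F']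

/-- The supremum of `|f|` over the image of an order interval. -/
noncomputable def opSup (T : E' →L[ℝ] F') (f : F' →L[ℝ] ℝ) (x : E') : ℝ :=
  ⨆ a : (T '' Set.Icc (-x) x), |f a.1|

omit [NormedSpace ℝ E'] in
lemma norm_le_of_mem_Icc' {x y : E'} (hx : 0 ≤ x) (hy : y ∈ Set.Icc (-x) x) : ‖y‖ ≤ ‖x‖ :=
  HasSolidNorm.solid (by rw [abs_of_nonneg hx]; exact abs_le'.2 ⟨hy.2, neg_le.2 hy.1⟩)

lemma opSup_nonneg (T : E' →L[ℝ] F') (f : F' →L[ℝ] ℝ) (x : E') : 0 ≤ opSup T f x :=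
  Real.iSup_nonneg fun _ => abs_nonneg _

lemma opSup_le {T : E' →L[ℝ] F'} {f : F' →L[ℝ] ℝ} {x : E'} {c : ℝ}
    (h : ∀ y ∈ Set.Icc (-x) x, |f (T y)| ≤ c) (hc : 0 ≤ c) : opSup T f x ≤ c :=
  Real.iSup_le (fun a => by obtain ⟨y, hy, hya⟩ := a.2; rw [← hya]; exact h y hy) hc

lemma le_opSup (T : E' →L[ℝ] F') (f : F' →L[ℝ] ℝ) {x : E'} (hx : 0 ≤ x) {y : E'}
    (hy : y ∈ Set.Icc (-x) x) : |f (T y)| ≤ opSup T f x := by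
  have hbdd : BddAbove (Set.range fun a : (T '' Set.Icc (-x) x) => |f a.1|) := by
    refine ⟨‖f‖ * ‖T‖ * ‖x‖, ?_⟩
    rintro r ⟨a, rfl⟩
    obtain ⟨z, hz, hza⟩ := a.2
    simp only
    rw [← hza]
    calc |f (T z)| ≤ ‖f‖ * ‖T z‖ := f.le_opNorm _
      _ ≤ ‖f‖ * (‖T‖ * ‖z‖) := by gcongr; exact T.le_opNorm z
      _ ≤ ‖f‖ * (‖T‖ * ‖x‖) := by gcongr; exact norm_le_of_mem_Icc' hx hz
      _ = ‖f‖ * ‖T‖ * ‖x‖ := by ring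
  exact le_ciSup hbdd (⟨T y, Set.mem_image_of_mem T hy⟩ : (T '' Set.Icc (-x) x))

end AuxLemmas

/-- The order almost Dunford-Pettis operators form a norm closed vector subspace of
`L(E,F)`. -/
theorem orderAlmostDP_closed_subspace [NormedAddCommGroup E] [Lattice E] [HasSolidNorm E] [IsOrderedAddMonoid E] [NormedSpace ℝ E] [PosSMulStrictMono ℝ E] [PosSMulReflectLT ℝ E] [CompleteSpace E] [NormedAddCommGroup F] [Lattice F] [HasSolidNorm F] [IsOrderedAddMonoid F] [NormedSpace ℝ F] [PosSMulStrictMono ℝ F] [PosSMulReflectLT ℝ F] [CompleteSpace F] :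
    OrderAlmostDP (0 : E →L[ℝ] F) ∧
    (∀ T S : E →L[ℝ] F, OrderAlmostDP T → OrderAlmostDP S → OrderAlmostDP (T + S)) ∧
    (∀ (c : ℝ) (T : E →L[ℝ] F), OrderAlmostDP T → OrderAlmostDP (c • T)) ∧
    IsClosed {T : E →L[ℝ] F | OrderAlmostDP T} := by
  refine ⟨?_, ?_, ?_, ?_⟩
  · intro x hx f _ _
    show Tendsto (fun n => opSup (0 : E →L[ℝ] F) (f n) x) atTop (𝓝 0)
    have h0 : ∀ n, opSup (0 : E →L[ℝ] F) (f n) x = 0 := fun n =>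
      le_antisymm (opSup_le (fun y _ => by simp) le_rfl) (opSup_nonneg _ _ _)
    simpa [h0] using (tendsto_const_nhds : Tendsto (fun _ : ℕ => (0:ℝ)) atTop (𝓝 0))
  · intro T S hT hS x hx f hd hw
    show Tendsto (fun n => opSup (T + S) (f n) x) atTop (𝓝 0)
    have hTt : Tendsto (fun n => opSup T (f n) x) atTop (𝓝 0) := hT x hx f hd hw
    have hSt : Tendsto (fun n => opSup S (f n) x) atTop (𝓝 0) := hS x hx f hd hw
    refine squeeze_zero (fun n => opSup_nonneg _ _ _) (fun n => ?_)
      (by simpa using hTt.add hSt)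
    refine opSup_le (fun y hy => ?_)
      (add_nonneg (opSup_nonneg _ _ _) (opSup_nonneg _ _ _))
    calc |f n ((T + S) y)| = |f n (T y) + f n (S y)| := by
          simp [ContinuousLinearMap.add_apply]
      _ ≤ |f n (T y)| + |f n (S y)| := abs_add_le _ _
      _ ≤ _ := add_le_add (le_opSup T (f n) hx hy) (le_opSup S (f n) hx hy)
  · intro c T hT x hx f hd hw
    show Tendsto (fun n => opSup (c • T) (f n) x) atTop (𝓝 0)
    have hTt : Tendsto (fun n => opSup T (f n) x) atTop (𝓝 0) := hT x hx f hd hw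
    refine squeeze_zero (fun n => opSup_nonneg _ _ _) (fun n => ?_)
      (by simpa using hTt.const_mul |c|)
    refine opSup_le (fun y hy => ?_)
      (mul_nonneg (abs_nonneg _) (opSup_nonneg _ _ _))
    calc |f n ((c • T) y)| = |c| * |f n (T y)| := by
          rw [ContinuousLinearMap.smul_apply, map_smul, smul_eq_mul, abs_mul]
      _ ≤ |c| * opSup T (f n) x := by gcongr; exact le_opSup T (f n) hx hy
  · refine isClosed_of_closure_subset fun T hT => ?_
    intro x hx f hd hw
    show Tendsto (fun n => opSup T (f n) x) atTop (𝓝 0)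
    obtain ⟨M, hM0, hM⟩ := weaklyNull_bdd' f hw
    rw [Metric.tendsto_atTop]
    intro ε hε
    set δ := ε / (2 * (M * ‖x‖ + 1)) with hδdef
    have hδ : 0 < δ := by positivity
    obtain ⟨S, hSmem, hdist⟩ := Metric.mem_closure_iff.1 hT δ hδ
    have hStend : Tendsto (fun n => opSup S (f n) x) atTop (𝓝 0) := hSmem x hx f hd hw
    rw [Metric.tendsto_atTop] at hStend
    obtain ⟨N, hN⟩ := hStend (ε / 2) (by positivity)
    refine ⟨N, fun n hn => ?_⟩
    have hTS : ‖T - S‖ ≤ δ := by rw [← dist_eq_norm]; exact hdist.le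
    have h1 : opSup T (f n) x ≤ opSup S (f n) x + M * ‖x‖ * δ := by
      refine opSup_le (fun y hy => ?_)
        (add_nonneg (opSup_nonneg _ _ _) (by positivity))
      have hsplit : |f n (T y)| ≤ |f n (S y)| + |f n ((T - S) y)| := by
        have : f n (T y) = f n (S y) + f n ((T - S) y) := by
          rw [ContinuousLinearMap.sub_apply, ← map_add]; congr 1; abel
        rw [this]; exact abs_add_le _ _
      refine hsplit.trans (add_le_add (le_opSup S (f n) hx hy) ?_)
      calc |f n ((T - S) y)| ≤ ‖f n‖ * ‖(T - S) y‖ := (f n).le_opNorm _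
        _ ≤ ‖f n‖ * (‖T - S‖ * ‖y‖) := by gcongr; exact (T - S).le_opNorm y
        _ ≤ M * (δ * ‖x‖) := by
            gcongr <;>
              first
                | exact hM n
                | exact hTS
                | exact norm_le_of_mem_Icc' hx hy
        _ = M * ‖x‖ * δ := by ring
    have h2 : M * ‖x‖ * δ < ε / 2 := by
      have he : (M * ‖x‖ + 1) * δ = ε / 2 := by
        rw [hδdef]; field_simp
      calc M * ‖x‖ * δ < (M * ‖x‖ + 1) * δ := by nlinarith
        _ = ε / 2 := he
    have h3 := hN n hn
    rw [Real.dist_eq, sub_zero, abs_of_nonneg (opSup_nonneg _ _ _)] at h3 ⊢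
    linarith
end
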